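/- arXiv:1408.3751 — 10 statements merged into one kernel-verified Lean document; each statement's English description precedes it below -/
import Mathlib

section
/- Let n ≠ 0, p ≠ 2/n, c3 ≠ 0, and c1, c2 real. Then u(t,r) = (c2 + c3 t)^{−n/2} · exp(i c1 − i c3 r²/(4(c2 + c3 t)) + (2 i k/(c3(np−2)))(c2 + c3 t)^{1−np/2}) satisfies i u_t = u_{rr} + ((n−1)/r) u_r + k |u|^p u on any domain where c2 + c3 t > 0 and r > 0. -/
open Real

/-- The radial gNLS equation `i u_t = u_rr + ((n-1)/r) u_r + k |u|^p u` at a point `(t,r)`. -/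
noncomputable def gnls (k p n : ℝ) (u : ℝ → ℝ → ℂ) (t r : ℝ) : Prop :=
  Complex.I * deriv (fun s => u s r) t =
    deriv (deriv (fun s => u t s)) r
      + (((n - 1) / r : ℝ) : ℂ) * deriv (fun s => u t s) r
      + (k : ℂ) * ((‖u t r‖ ^ p : ℝ) : ℂ) * u t r

set_option maxHeartbeats 1000000 in
theorem stmt1 (k p n c1 c2 c3 : ℝ) (hk : k ≠ 0) (hp : p ≠ 0) (hn : n ≠ 0)
    (hpn : p ≠ 2 / n) (hc3 : c3 ≠ 0) :
    ∀ t r : ℝ, 0 < c2 + c3 * t → 0 < r →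
      gnls k p n
        (fun t r => (((c2 + c3 * t) ^ (-(n / 2)) : ℝ) : ℂ)
          * Complex.exp (Complex.I * c1
              - Complex.I * c3 * r ^ 2 / (4 * (c2 + c3 * t))
              + (2 * Complex.I * k / (c3 * (n * p - 2)))
                  * (((c2 + c3 * t) ^ (1 - n * p / 2) : ℝ) : ℂ))) t r := by
  intro t r ht hr
  unfold gnls
  simp only []
  have ha : (0:ℝ) < c2 + c3 * t := ht
  have ha' : c2 + c3 * t ≠ 0 := ne_of_gt ha
  set a : ℝ := c2 + c3 * t with hadef
  have haC : (a : ℂ) ≠ 0 := by exact_mod_cast ha'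
  have hT : (c2:ℂ) + (c3:ℂ) * (t:ℂ) = (a : ℂ) := by push_cast [hadef]; ring
  set e1 : ℝ := -(n/2) with he1
  set e2 : ℝ := 1 - n * p / 2 with he2
  set K : ℂ := 2 * Complex.I * (k:ℂ) / ((c3:ℂ) * ((n:ℂ) * (p:ℂ) - 2)) with hK
  -- time direction
  have hlin : HasDerivAt (fun s : ℝ => c2 + c3 * s) c3 t := by
    simpa using ((hasDerivAt_id t).const_mul c3).const_add c2
  have hlinC : HasDerivAt (fun s : ℝ => (c2:ℂ) + (c3:ℂ) * (s:ℂ)) (c3:ℂ) t := by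
    have := hlin.ofReal_comp
    simpa [Complex.ofReal_add, Complex.ofReal_mul] using this
  have hpow : ∀ q : ℝ, HasDerivAt (fun s : ℝ => (c2 + c3 * s) ^ q) (q * a ^ (q-1) * c3) t := by
    intro q
    have h := (Real.hasDerivAt_rpow_const (x := a) (p := q) (Or.inl ha')).comp t hlin
    exact h
  have hpowC : ∀ q : ℝ, HasDerivAt (fun s : ℝ => (((c2 + c3 * s) ^ q : ℝ) : ℂ))
      ((q * a ^ (q-1) * c3 : ℝ) : ℂ) t := fun q => (hpow q).ofReal_comp
  have hden : HasDerivAt (fun s : ℝ => 4 * ((c2:ℂ) + (c3:ℂ) * (s:ℂ))) (4 * c3) t :=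
    hlinC.const_mul 4
  have hdne : 4 * ((c2:ℂ) + (c3:ℂ) * (t:ℂ)) ≠ 0 := by
    rw [hT]; exact mul_ne_zero (by norm_num) haC
  have hfrac : HasDerivAt
      (fun s : ℝ => Complex.I * (c3:ℂ) * (r:ℂ) ^ 2 / (4 * ((c2:ℂ) + (c3:ℂ) * (s:ℂ))))
      ((0 * (4 * ((c2:ℂ) + (c3:ℂ) * (t:ℂ))) - Complex.I * (c3:ℂ) * (r:ℂ) ^ 2 * (4 * c3))
        / (4 * ((c2:ℂ) + (c3:ℂ) * (t:ℂ))) ^ 2) t :=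
    (hasDerivAt_const t _).div hden hdne
  have hz : HasDerivAt
      (fun s : ℝ => Complex.I * (c1:ℂ)
        - Complex.I * (c3:ℂ) * (r:ℂ) ^ 2 / (4 * ((c2:ℂ) + (c3:ℂ) * (s:ℂ)))
        + K * (((c2 + c3 * s) ^ e2 : ℝ) : ℂ))
      (-((0 * (4 * ((c2:ℂ) + (c3:ℂ) * (t:ℂ))) - Complex.I * (c3:ℂ) * (r:ℂ) ^ 2 * (4 * c3))
        / (4 * ((c2:ℂ) + (c3:ℂ) * (t:ℂ))) ^ 2)
        + K * ((e2 * a ^ (e2-1) * c3 : ℝ) : ℂ)) t := by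
    have := ((hasDerivAt_const t (Complex.I * (c1:ℂ))).sub hfrac).add ((hpowC e2).const_mul K)
    exact this.congr_deriv (by ring)
  have hut : HasDerivAt (fun s : ℝ => (((c2 + c3 * s) ^ e1 : ℝ) : ℂ)
        * Complex.exp (Complex.I * (c1:ℂ)
          - Complex.I * (c3:ℂ) * (r:ℂ) ^ 2 / (4 * ((c2:ℂ) + (c3:ℂ) * (s:ℂ)))
          + K * (((c2 + c3 * s) ^ e2 : ℝ) : ℂ)))
      (((e1 * a ^ (e1-1) * c3 : ℝ) : ℂ) * Complex.exp (Complex.I * (c1:ℂ)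
          - Complex.I * (c3:ℂ) * (r:ℂ) ^ 2 / (4 * ((c2:ℂ) + (c3:ℂ) * (t:ℂ)))
          + K * ((a ^ e2 : ℝ) : ℂ))
        + ((a ^ e1 : ℝ) : ℂ) * (Complex.exp (Complex.I * (c1:ℂ)
          - Complex.I * (c3:ℂ) * (r:ℂ) ^ 2 / (4 * ((c2:ℂ) + (c3:ℂ) * (t:ℂ)))
          + K * ((a ^ e2 : ℝ) : ℂ)) *
          (-((0 * (4 * ((c2:ℂ) + (c3:ℂ) * (t:ℂ))) - Complex.I * (c3:ℂ) * (r:ℂ) ^ 2 * (4 * c3))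
            / (4 * ((c2:ℂ) + (c3:ℂ) * (t:ℂ))) ^ 2)
          + K * ((e2 * a ^ (e2-1) * c3 : ℝ) : ℂ)))) t := by
    exact (hpowC e1).mul hz.cexp
  -- space direction
  have hsq : ∀ x : ℝ, HasDerivAt (fun y : ℝ => ((y:ℂ)) ^ 2) (2 * (x:ℂ)) x := by
    intro x
    simpa using (hasDerivAt_pow 2 ((x:ℝ):ℂ)).comp_ofReal
  have hnum : ∀ x : ℝ, HasDerivAt (fun y : ℝ => Complex.I * (c3:ℂ) * ((y:ℂ)) ^ 2)
      (Complex.I * (c3:ℂ) * (2 * (x:ℂ))) x := fun x => (hsq x).const_mul _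
  have hwx : ∀ x : ℝ, HasDerivAt
      (fun y : ℝ => Complex.I * (c1:ℂ)
        - Complex.I * (c3:ℂ) * ((y:ℂ)) ^ 2 / (4 * ((c2:ℂ) + (c3:ℂ) * (t:ℂ)))
        + K * ((a ^ e2 : ℝ) : ℂ))
      (-(Complex.I * (c3:ℂ) * (2 * (x:ℂ)) / (4 * ((c2:ℂ) + (c3:ℂ) * (t:ℂ))))) x := by
    intro x
    have := ((hasDerivAt_const x (Complex.I * (c1:ℂ))).sub
      ((hnum x).div_const (4 * ((c2:ℂ) + (c3:ℂ) * (t:ℂ))))).add_const (K * ((a ^ e2 : ℝ) : ℂ))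
    simpa [zero_sub] using this
  have hCE : ∀ x : ℝ, HasDerivAt
      (fun y : ℝ => ((a ^ e1 : ℝ) : ℂ) * Complex.exp (Complex.I * (c1:ℂ)
        - Complex.I * (c3:ℂ) * ((y:ℂ)) ^ 2 / (4 * ((c2:ℂ) + (c3:ℂ) * (t:ℂ)))
        + K * ((a ^ e2 : ℝ) : ℂ)))
      (((a ^ e1 : ℝ) : ℂ) * (Complex.exp (Complex.I * (c1:ℂ)
        - Complex.I * (c3:ℂ) * ((x:ℂ)) ^ 2 / (4 * ((c2:ℂ) + (c3:ℂ) * (t:ℂ)))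
        + K * ((a ^ e2 : ℝ) : ℂ)) *
        (-(Complex.I * (c3:ℂ) * (2 * (x:ℂ)) / (4 * ((c2:ℂ) + (c3:ℂ) * (t:ℂ))))))) x :=
    fun x => (hwx x).cexp.const_mul _
  have hDr : (deriv fun s : ℝ => ((a ^ e1 : ℝ) : ℂ) * Complex.exp (Complex.I * (c1:ℂ)
        - Complex.I * (c3:ℂ) * ((s:ℂ)) ^ 2 / (4 * ((c2:ℂ) + (c3:ℂ) * (t:ℂ)))
        + K * ((a ^ e2 : ℝ) : ℂ)))
      = fun x : ℝ => ((a ^ e1 : ℝ) : ℂ) * Complex.exp (Complex.I * (c1:ℂ)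
        - Complex.I * (c3:ℂ) * ((x:ℂ)) ^ 2 / (4 * ((c2:ℂ) + (c3:ℂ) * (t:ℂ)))
        + K * ((a ^ e2 : ℝ) : ℂ)) * (-(Complex.I * (c3:ℂ) * (x:ℂ)) / (2 * (a:ℂ))) := by
    funext x
    rw [(hCE x).deriv, hT]
    field_simp
    ring
  have hL : HasDerivAt (fun x : ℝ => -(Complex.I * (c3:ℂ) * (x:ℂ)) / (2 * (a:ℂ)))
      (-(Complex.I * (c3:ℂ)) / (2 * (a:ℂ))) r := by
    have h0 : HasDerivAt (fun x : ℝ => Complex.I * (c3:ℂ) * (x:ℂ)) (Complex.I * (c3:ℂ)) r := by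
      simpa using (Complex.ofRealCLM.hasDerivAt (x := r)).const_mul (Complex.I * (c3:ℂ))
    simpa [neg_div] using (h0.neg.div_const (2 * (a:ℂ)))
  have hF : HasDerivAt
      (fun x : ℝ => ((a ^ e1 : ℝ) : ℂ) * Complex.exp (Complex.I * (c1:ℂ)
        - Complex.I * (c3:ℂ) * ((x:ℂ)) ^ 2 / (4 * ((c2:ℂ) + (c3:ℂ) * (t:ℂ)))
        + K * ((a ^ e2 : ℝ) : ℂ)) * (-(Complex.I * (c3:ℂ) * (x:ℂ)) / (2 * (a:ℂ))))
      ((((a ^ e1 : ℝ) : ℂ) * (Complex.exp (Complex.I * (c1:ℂ)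
        - Complex.I * (c3:ℂ) * ((r:ℂ)) ^ 2 / (4 * ((c2:ℂ) + (c3:ℂ) * (t:ℂ)))
        + K * ((a ^ e2 : ℝ) : ℂ)) *
        (-(Complex.I * (c3:ℂ) * (2 * (r:ℂ)) / (4 * ((c2:ℂ) + (c3:ℂ) * (t:ℂ)))))))
        * (-(Complex.I * (c3:ℂ) * (r:ℂ)) / (2 * (a:ℂ)))
        + ((a ^ e1 : ℝ) : ℂ) * Complex.exp (Complex.I * (c1:ℂ)
          - Complex.I * (c3:ℂ) * ((r:ℂ)) ^ 2 / (4 * ((c2:ℂ) + (c3:ℂ) * (t:ℂ)))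
          + K * ((a ^ e2 : ℝ) : ℂ)) * (-(Complex.I * (c3:ℂ)) / (2 * (a:ℂ)))) r :=
    (hCE r).mul hL
  -- the modulus
  have habs : ‖(((a ^ e1 : ℝ) : ℂ) * Complex.exp (Complex.I * (c1:ℂ)
      - Complex.I * (c3:ℂ) * ((r:ℂ)) ^ 2 / (4 * ((c2:ℂ) + (c3:ℂ) * (t:ℂ)))
      + K * ((a ^ e2 : ℝ) : ℂ)))‖ = a ^ e1 := by
    have hzI : Complex.I * (c1:ℂ)
        - Complex.I * (c3:ℂ) * ((r:ℂ)) ^ 2 / (4 * ((c2:ℂ) + (c3:ℂ) * (t:ℂ)))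
        + K * ((a ^ e2 : ℝ) : ℂ)
        = Complex.I * ((c1 - c3 * r ^ 2 / (4 * a)
            + (2 * k / (c3 * (n * p - 2))) * a ^ e2 : ℝ) : ℂ) := by
      rw [hT, hK]
      have hnp : (n:ℂ) * p - 2 ≠ 0 := by
        intro h
        apply hpn
        have : n * p - 2 = 0 := by exact_mod_cast h
        field_simp
        linarith
      have hc3C : (c3:ℂ) ≠ 0 := by exact_mod_cast hc3
      push_cast
      field_simp
    rw [hzI, norm_mul, Complex.norm_real, Complex.norm_exp, Complex.I_mul_re,
      Complex.ofReal_im, neg_zero, Real.exp_zero, mul_one,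
      Real.norm_of_nonneg (Real.rpow_nonneg ha.le e1)]
  -- assemble
  have hnp : n * p - 2 ≠ 0 := by
    intro h
    apply hpn
    field_simp
    linarith
  have hnpC : (n:ℂ) * p - 2 ≠ 0 := by exact_mod_cast hnp
  have hc3C : (c3:ℂ) ≠ 0 := by exact_mod_cast hc3
  have hrC : (r:ℂ) ≠ 0 := by exact_mod_cast ne_of_gt hr
  have hpw : (a ^ e1) ^ p = a ^ (e2 - 1) := by
    rw [← Real.rpow_mul ha.le]
    congr 1
    rw [he1, he2]; ring
  have hA1 : a ^ (e1 - 1) = a ^ e1 / a := by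
    rw [Real.rpow_sub ha, Real.rpow_one]
  have hA2 : a ^ e2 = a ^ (e2 - 1) * a := by
    rw [← Real.rpow_add_one ha' (e2 - 1)]
    congr 1
    ring
  rw [hut.deriv]
  simp only [hDr]
  rw [hF.deriv, habs, hpw, hT, hK]
  rw [hA1, hA2]
  push_cast
  have hE1C : (e1:ℂ) = -((n:ℂ)/2) := by rw [he1]; push_cast; ring
  have hE2C : (e2:ℂ) = 1 - (n:ℂ)*(p:ℂ)/2 := by rw [he2]; push_cast; ring
  rw [hE1C, hE2C]
  generalize hE : Complex.exp (Complex.I * (c1:ℂ) - Complex.I * (c3:ℂ) * (r:ℂ) ^ 2 / (4 * (a:ℂ)) +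
      2 * Complex.I * (k:ℂ) / ((c3:ℂ) * ((n:ℂ) * (p:ℂ) - 2)) * (((a ^ (e2 - 1) : ℝ):ℂ) * (a:ℂ))) = E
  have hEne : E ≠ 0 := hE ▸ Complex.exp_ne_zero _
  field_simp [haC, hrC, hc3C, hnpC, hEne]
  have hD1 : (2 * (a:ℂ) * ((4 * (a:ℂ)) ^ 2 * ((c3:ℂ) * ((n:ℂ) * (p:ℂ) - 2) * 2))) ≠ 0 := by
    simp [haC, hc3C, hnpC, sub_ne_zero]
  have hD2 : (4 * (a:ℂ) * (2 * (a:ℂ)) * (2 * (a:ℂ)) * ((r:ℂ) * (2 * (a:ℂ)))) ≠ 0 := by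
    simp [haC, hrC]
  ring_nf
  simp only [Complex.I_sq]
  ring_nf
end

section
/- Let n ≠ 0, p = 2/n, c3 ≠ 0. Then u(t,r) = (c2 + c3 t)^{−n/2} · exp(i c1 − i c3 r²/(4(c2 + c3 t)) − (i k/c3) ln(c2 + c3 t)) satisfies i u_t = u_{rr} + ((n−1)/r) u_r + k |u|^{2/n} u on any domain where c2 + c3 t > 0 and r > 0. -/
open Real

theorem stmt2 (k n c1 c2 c3 : ℝ) (hk : k ≠ 0) (hn : n ≠ 0) (hc3 : c3 ≠ 0) :
    ∀ t r : ℝ, 0 < c2 + c3 * t → 0 < r →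
      gnls k (2 / n) n
        (fun t r => (((c2 + c3 * t) ^ (-(n / 2)) : ℝ) : ℂ)
          * Complex.exp (Complex.I * c1
              - Complex.I * c3 * r ^ 2 / (4 * (c2 + c3 * t))
              - (Complex.I * k / c3) * (Real.log (c2 + c3 * t) : ℝ))) t r := by
  intro t r hs hr
  have hu : (fun t r : ℝ => (((c2 + c3 * t) ^ (-(n / 2)) : ℝ) : ℂ)
          * Complex.exp (Complex.I * c1
              - Complex.I * c3 * r ^ 2 / (4 * (c2 + c3 * t))
              - (Complex.I * k / c3) * (Real.log (c2 + c3 * t) : ℝ)))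
      = (fun a b : ℝ => (((c2 + c3 * a) ^ (-(n / 2)) : ℝ) : ℂ)
          * Complex.exp (Complex.I * c1
              - Complex.I * c3 * (b : ℂ) ^ 2 / (4 * ((c2 + c3 * a : ℝ) : ℂ))
              - Complex.I * k / c3 * ((Real.log (c2 + c3 * a) : ℝ) : ℂ))) := by
    funext a b
    congr 2
    push_cast
    ring
  rw [hu]
  unfold gnls
  simp only []
  set s : ℝ := c2 + c3 * t with hsdef
  have hs0 : s ≠ 0 := ne_of_gt hs
  have hS0 : (s : ℂ) ≠ 0 := by exact_mod_cast hs0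
  have hr0 : (r : ℂ) ≠ 0 := by exact_mod_cast ne_of_gt hr
  have hc3' : (c3 : ℂ) ≠ 0 := by exact_mod_cast hc3
  -- time derivative
  have hlin : HasDerivAt (fun t' : ℝ => c2 + c3 * t') c3 t := by
    simpa using ((hasDerivAt_id t).const_mul c3).const_add c2
  have hpow : HasDerivAt (fun t' : ℝ => (c2 + c3 * t') ^ (-(n / 2)))
      (c3 * (-(n / 2)) * s ^ (-(n / 2) - 1)) t :=
    hlin.rpow_const (Or.inl hs0)
  have hinv : HasDerivAt (fun t' : ℝ =>
      Complex.I * c3 * (r : ℂ) ^ 2 / (4 * ((c2 + c3 * t' : ℝ) : ℂ)))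
      ((0 * (4 * (s:ℂ)) - Complex.I * c3 * (r : ℂ) ^ 2 * (4 * c3)) / (4 * (s:ℂ)) ^ 2) t :=
    (hasDerivAt_const t (Complex.I * c3 * (r : ℂ) ^ 2)).div
      ((hlin.ofReal_comp).const_mul 4) (mul_ne_zero (by norm_num) hS0)
  have hlog : HasDerivAt (fun t' : ℝ =>
      Complex.I * k / c3 * ((Real.log (c2 + c3 * t') : ℝ) : ℂ))
      (Complex.I * k / c3 * ((s⁻¹ * c3 : ℝ) : ℂ)) t :=
    (((Real.hasDerivAt_log hs0).comp t hlin).ofReal_comp).const_mul _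
  have hF : HasDerivAt (fun t' : ℝ =>
      (((c2 + c3 * t') ^ (-(n / 2)) : ℝ) : ℂ) * Complex.exp (Complex.I * c1
        - Complex.I * c3 * (r : ℂ) ^ 2 / (4 * ((c2 + c3 * t' : ℝ) : ℂ))
        - Complex.I * k / c3 * ((Real.log (c2 + c3 * t') : ℝ) : ℂ)))
      (((c3 * (-(n / 2)) * s ^ (-(n / 2) - 1) : ℝ) : ℂ) * Complex.exp (Complex.I * c1
          - Complex.I * c3 * (r : ℂ) ^ 2 / (4 * ((s : ℝ) : ℂ))
          - Complex.I * k / c3 * ((Real.log s : ℝ) : ℂ))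
        + ((s ^ (-(n / 2)) : ℝ) : ℂ) * (Complex.exp (Complex.I * c1
          - Complex.I * c3 * (r : ℂ) ^ 2 / (4 * ((s : ℝ) : ℂ))
          - Complex.I * k / c3 * ((Real.log s : ℝ) : ℂ)) *
          (0 - (0 * (4 * (s:ℂ)) - Complex.I * c3 * (r : ℂ) ^ 2 * (4 * c3)) / (4 * (s:ℂ)) ^ 2
            - Complex.I * k / c3 * ((s⁻¹ * c3 : ℝ) : ℂ)))) t :=
    (hpow.ofReal_comp).mul
      (((hasDerivAt_const t (Complex.I * (c1:ℂ))).sub hinv).sub hlog).cexp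
  rw [hF.deriv]
  -- space derivative of the exponential part
  have hE1 : ∀ x : ℝ, HasDerivAt (fun y : ℝ =>
      (((s : ℝ) ^ (-(n / 2)) : ℝ) : ℂ) * Complex.exp (Complex.I * c1
        - Complex.I * c3 * (y : ℂ) ^ 2 / (4 * ((s : ℝ) : ℂ))
        - Complex.I * k / c3 * ((Real.log s : ℝ) : ℂ)))
      ((((s : ℝ) ^ (-(n / 2)) : ℝ) : ℂ) * (Complex.exp (Complex.I * c1
        - Complex.I * c3 * (x : ℂ) ^ 2 / (4 * ((s : ℝ) : ℂ))
        - Complex.I * k / c3 * ((Real.log s : ℝ) : ℂ))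
        * (0 - Complex.I * c3 * (((2:ℕ):ℂ) * (x:ℂ) ^ (2-1) * 1) / (4 * ((s : ℝ) : ℂ)) - 0))) x := by
    intro x
    have h1 : HasDerivAt (fun y : ℝ => ((y : ℝ) : ℂ) ^ 2) (((2:ℕ):ℂ) * (x:ℂ) ^ (2-1) * 1) x := by
      simpa using (hasDerivAt_pow 2 ((x : ℝ) : ℂ)).comp_ofReal
    have h2 := (h1.const_mul (Complex.I * (c3 : ℂ))).div_const (4 * ((s : ℝ) : ℂ))
    have h3 := ((hasDerivAt_const x (Complex.I * (c1 : ℂ))).sub h2).sub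
      (hasDerivAt_const x (Complex.I * (k : ℂ) / (c3 : ℂ) * ((Real.log s : ℝ) : ℂ)))
    exact h3.cexp.const_mul _
  have hd1 : (deriv fun y : ℝ =>
      (((s : ℝ) ^ (-(n / 2)) : ℝ) : ℂ) * Complex.exp (Complex.I * c1
        - Complex.I * c3 * (y : ℂ) ^ 2 / (4 * ((s : ℝ) : ℂ))
        - Complex.I * k / c3 * ((Real.log s : ℝ) : ℂ)))
      = fun x : ℝ => (((s : ℝ) ^ (-(n / 2)) : ℝ) : ℂ) * Complex.exp (Complex.I * c1
        - Complex.I * c3 * (x : ℂ) ^ 2 / (4 * ((s : ℝ) : ℂ))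
        - Complex.I * k / c3 * ((Real.log s : ℝ) : ℂ))
        * (-(Complex.I * c3 / (2 * ((s : ℝ) : ℂ))) * (x : ℂ)) := by
    funext x
    rw [(hE1 x).deriv]
    push_cast
    ring
  rw [hd1]
  have hb : ∀ x : ℝ, HasDerivAt (fun y : ℝ =>
      -(Complex.I * c3 / (2 * ((s : ℝ) : ℂ))) * (y : ℂ))
      (-(Complex.I * c3 / (2 * ((s : ℝ) : ℂ))) * 1) x := by
    intro x
    exact ((hasDerivAt_id x).ofReal_comp).const_mul _
  have hE2 : HasDerivAt (fun y : ℝ =>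
      (((s : ℝ) ^ (-(n / 2)) : ℝ) : ℂ) * Complex.exp (Complex.I * c1
        - Complex.I * c3 * (y : ℂ) ^ 2 / (4 * ((s : ℝ) : ℂ))
        - Complex.I * k / c3 * ((Real.log s : ℝ) : ℂ))
        * (-(Complex.I * c3 / (2 * ((s : ℝ) : ℂ))) * (y : ℂ))) _ r := (hE1 r).mul (hb r)
  rw [hE2.deriv]
  simp only []
  -- the modulus term
  have habs : ‖((((s : ℝ) ^ (-(n / 2)) : ℝ) : ℂ) * Complex.exp (Complex.I * c1
        - Complex.I * c3 * (r : ℂ) ^ 2 / (4 * ((s : ℝ) : ℂ))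
        - Complex.I * k / c3 * ((Real.log s : ℝ) : ℂ)))‖ ^ (2 / n) = s⁻¹ := by
    have harg : (Complex.I * (c1 : ℂ)
        - Complex.I * c3 * (r : ℂ) ^ 2 / (4 * ((s : ℝ) : ℂ))
        - Complex.I * k / c3 * ((Real.log s : ℝ) : ℂ))
        = ((c1 - c3 * r ^ 2 / (4 * s) - k / c3 * Real.log s : ℝ) : ℂ) * Complex.I := by
      push_cast
      ring
    have hA : ‖((((s : ℝ) ^ (-(n / 2)) : ℝ) : ℂ) * Complex.exp (Complex.I * c1
        - Complex.I * c3 * (r : ℂ) ^ 2 / (4 * ((s : ℝ) : ℂ))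
        - Complex.I * k / c3 * ((Real.log s : ℝ) : ℂ)))‖ = s ^ (-(n / 2)) := by
      rw [norm_mul, harg, Complex.norm_exp_ofReal_mul_I, Complex.norm_real, Real.norm_eq_abs,
        abs_of_nonneg (Real.rpow_nonneg hs.le _), mul_one]
    rw [hA, ← Real.rpow_mul hs.le]
    have hexp : -(n / 2) * (2 / n) = -1 := by
      field_simp
    rw [hexp, Real.rpow_neg_one]
  rw [habs]
  have hss : s ^ (-(n / 2) - 1) = s ^ (-(n / 2)) / s := by
    rw [Real.rpow_sub hs, Real.rpow_one]
  rw [hss]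
  push_cast
  have hr1 : (r : ℂ) * ((r : ℂ))⁻¹ = 1 := mul_inv_cancel₀ hr0
  have hc31 : (c3 : ℂ) * ((c3 : ℂ))⁻¹ = 1 := mul_inv_cancel₀ hc3'
  linear_combination (Complex.I * (c3 : ℂ) * ((n : ℂ) - 1) / 2
      * ((s ^ (-(n / 2)) : ℝ) : ℂ)
      * Complex.exp (Complex.I * c1
          - Complex.I * c3 * (r : ℂ) ^ 2 / (4 * ((s : ℝ) : ℂ))
          - Complex.I * k / c3 * ((Real.log s : ℝ) : ℂ)) * (((s : ℝ) : ℂ))⁻¹) * hr1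
    + (-(Complex.I ^ 2 * ((s ^ (-(n / 2)) : ℝ) : ℂ)
      * Complex.exp (Complex.I * c1
          - Complex.I * c3 * (r : ℂ) ^ 2 / (4 * ((s : ℝ) : ℂ))
          - Complex.I * k / c3 * ((Real.log s : ℝ) : ℂ)) * (k : ℂ) * (((s : ℝ) : ℂ))⁻¹)) * hc31
    + (-((k : ℂ) * ((s ^ (-(n / 2)) : ℝ) : ℂ)
    * Complex.exp (Complex.I * c1
        - Complex.I * c3 * (r : ℂ) ^ 2 / (4 * ((s : ℝ) : ℂ))
        - Complex.I * k / c3 * ((Real.log s : ℝ) : ℂ)) / ((s : ℝ) : ℂ))) * Complex.I_sq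
end

section
/- Let n ≠ 2, 3, k(2−n) > 0, and p = 2(3−n)/(n−2). Then the static function u(t,r) = (k(n−3)²/(2−n)³)^{(2−n)/(6−2n)} · (r + c2 r^{3−n})^{(2−n)/(3−n)} · exp(i c1) satisfies i u_t = u_{rr} + ((n−1)/r) u_r + k |u|^p u on any domain where r > 0 and r + c2 r^{3−n} > 0. -/
open Real

theorem stmt4 (k n c1 c2 : ℝ) (hk : k ≠ 0) (hn2 : n ≠ 2) (hn3 : n ≠ 3)
    (hkn : 0 < k * (2 - n)) :
    ∀ t r : ℝ, 0 < r → 0 < r + c2 * (r ^ (3 - n) : ℝ) →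
      gnls k (2 * (3 - n) / (n - 2)) n
        (fun _ r => (((k * (n - 3) ^ 2 / (2 - n) ^ 3) ^ ((2 - n) / (6 - 2 * n)) : ℝ) : ℂ)
          * (((r + c2 * (r ^ (3 - n) : ℝ)) ^ ((2 - n) / (3 - n)) : ℝ) : ℂ)
          * Complex.exp (Complex.I * c1)) t r := by
  intro t r hr hwr
  unfold gnls
  simp only [deriv_const', mul_zero]
  have h2n : (2:ℝ) - n ≠ 0 := sub_ne_zero.mpr fun h => hn2 (by linarith)
  have h3n : (3:ℝ) - n ≠ 0 := sub_ne_zero.mpr fun h => hn3 (by linarith)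
  have hn2' : n - 2 ≠ 0 := sub_ne_zero.mpr hn2
  have hn3' : n - 3 ≠ 0 := sub_ne_zero.mpr hn3
  set α := (2 - n) / (3 - n) with hα
  set B := k * (n - 3) ^ 2 / (2 - n) ^ 3 with hB
  have hn3sq : (0:ℝ) < (n - 3) ^ 2 := (sq_nonneg _).lt_of_ne' (pow_ne_zero 2 hn3')
  have hBpos : 0 < B := by
    have h4 : (0:ℝ) < (2 - n) ^ 4 := by positivity
    have : B = k * (2 - n) * (n - 3) ^ 2 / (2 - n) ^ 4 := by
      rw [hB]; field_simp
    rw [this]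
    exact div_pos (mul_pos hkn hn3sq) h4
  set A := B ^ ((2 - n) / (6 - 2 * n)) with hAdef
  have hApos : 0 < A := Real.rpow_pos_of_pos hBpos _
  set E := Complex.exp (Complex.I * c1) with hE
  set W : ℝ → ℝ := fun x => x + c2 * x ^ ((3:ℝ) - n) with hWdef
  -- the open set
  set S : Set ℝ := {x | 0 < x ∧ 0 < W x} with hS
  have hSopen : IsOpen S := by
    have hco : ContinuousOn W (Set.Ioi (0:ℝ)) := by
      apply continuousOn_id.add
      apply continuousOn_const.mul
      intro x hx
      exact (Real.continuousAt_rpow_const x _ (Or.inl (ne_of_gt hx))).continuousWithinAt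
    have : S = Set.Ioi (0:ℝ) ∩ W ⁻¹' Set.Ioi (0:ℝ) := by
      ext x; simp [hS, Set.mem_Ioi]
    rw [this]
    exact hco.isOpen_inter_preimage isOpen_Ioi isOpen_Ioi
  have hrS : r ∈ S := ⟨hr, hwr⟩
  -- derivative of W
  have hWd : ∀ x ∈ S, HasDerivAt W (1 + c2 * ((3 - n) * x ^ ((2:ℝ) - n))) x := by
    intro x hx
    have h1 : HasDerivAt (fun y : ℝ => y ^ ((3:ℝ) - n)) ((3 - n) * x ^ ((3:ℝ) - n - 1)) x :=
      Real.hasDerivAt_rpow_const (Or.inl (ne_of_gt hx.1))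
    have h2 := (hasDerivAt_id x).add (h1.const_mul c2)
    rw [show (3:ℝ) - n - 1 = 2 - n by ring] at h2
    exact h2.congr_deriv (by ring)
  -- first derivative of the profile
  set G : ℝ → ℝ := fun x => (1 + c2 * ((3 - n) * x ^ ((2:ℝ) - n))) * α * W x ^ (α - 1)
    with hG
  have hfd : ∀ x ∈ S, HasDerivAt (fun y => (A:ℂ) * ((W y ^ α : ℝ) : ℂ) * E) ((G x : ℝ) * ((A:ℂ) * E)) x := by
    intro x hx
    have hg : HasDerivAt (fun y => W y ^ α)
        ((1 + c2 * ((3 - n) * x ^ ((2:ℝ) - n))) * α * W x ^ (α - 1)) x :=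
      (hWd x hx).rpow_const (Or.inl (ne_of_gt hx.2))
    have := ((hg.ofReal_comp.const_mul (A:ℂ)).mul_const E)
    refine this.congr_deriv ?_
    push_cast [hG]
    ring
  have hderiv1 : (deriv fun y => (A:ℂ) * ((W y ^ α : ℝ) : ℂ) * E)
      =ᶠ[nhds r] fun x => ((G x : ℝ) : ℂ) * ((A:ℂ) * E) :=
    Filter.eventuallyEq_of_mem (hSopen.mem_nhds hrS) fun x hx => (hfd x hx).deriv
  -- second derivative
  have hGd : HasDerivAt G
      ((c2 * ((3 - n) * ((2 - n) * r ^ ((1:ℝ) - n)))) * α * W r ^ (α - 1)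
        + ((1 + c2 * ((3 - n) * r ^ ((2:ℝ) - n))) * α)
          * ((1 + c2 * ((3 - n) * r ^ ((2:ℝ) - n))) * (α - 1) * W r ^ (α - 1 - 1))) r := by
    have h1 : HasDerivAt (fun y : ℝ => y ^ ((2:ℝ) - n)) ((2 - n) * r ^ ((2:ℝ) - n - 1)) r :=
      Real.hasDerivAt_rpow_const (Or.inl (ne_of_gt hr))
    have h2 : HasDerivAt (fun y : ℝ => 1 + c2 * ((3 - n) * y ^ ((2:ℝ) - n)))
        (c2 * ((3 - n) * ((2 - n) * r ^ ((1:ℝ) - n)))) r := by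
      have := (hasDerivAt_const r (1:ℝ)).add (((h1.const_mul (3 - n)).const_mul c2))
      rw [show (2:ℝ) - n - 1 = 1 - n by ring] at this
      exact this.congr_deriv (by ring)
    have h3 : HasDerivAt (fun y => W y ^ (α - 1))
        ((1 + c2 * ((3 - n) * r ^ ((2:ℝ) - n))) * (α - 1) * W r ^ (α - 1 - 1)) r :=
      (hWd r hrS).rpow_const (Or.inl (ne_of_gt hwr))
    exact (h2.mul_const α).mul h3
  have hd2 : deriv (deriv (fun y => (A:ℂ) * ((W y ^ α : ℝ) : ℂ) * E)) r
      = (((c2 * ((3 - n) * ((2 - n) * r ^ ((1:ℝ) - n)))) * α * W r ^ (α - 1)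
        + ((1 + c2 * ((3 - n) * r ^ ((2:ℝ) - n))) * α)
          * ((1 + c2 * ((3 - n) * r ^ ((2:ℝ) - n))) * (α - 1) * W r ^ (α - 1 - 1)) : ℝ) : ℂ)
        * ((A:ℂ) * E) := by
    rw [hderiv1.deriv_eq]
    exact ((hGd.ofReal_comp).mul_const ((A:ℂ) * E)).deriv
  have hd1 : deriv (fun y => (A:ℂ) * ((W y ^ α : ℝ) : ℂ) * E) r = ((G r : ℝ) : ℂ) * ((A:ℂ) * E) :=
    (hfd r hrS).deriv
  -- abs of the solution
  have habs : ‖((A:ℂ) * ((W r ^ α : ℝ) : ℂ) * E)‖ = A * W r ^ α := by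
    have hEabs : ‖E‖ = 1 := by
      rw [hE, Complex.norm_exp]
      simp
    rw [norm_mul, norm_mul, hEabs, Complex.norm_of_nonneg hApos.le,
      Complex.norm_of_nonneg (Real.rpow_pos_of_pos hwr α).le, mul_one]
  have hWrpos : 0 < W r := hwr
  have hwrW : r + c2 * r ^ ((3:ℝ) - n) = W r := rfl
  have hfun : (fun s => (A:ℂ) * (((s + c2 * s ^ ((3:ℝ) - n)) ^ α : ℝ) : ℂ) * E)
      = (fun y => (A:ℂ) * ((W y ^ α : ℝ) : ℂ) * E) := rfl
  rw [hfun, hwrW, hd2, hd1, habs]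
  set p := 2 * (3 - n) / (n - 2) with hp
  have h62 : (6:ℝ) - 2 * n ≠ 0 := by intro h; exact h3n (by linarith)
  have hs : (0:ℝ) < r ^ ((2:ℝ) - n) := Real.rpow_pos_of_pos hr _
  have e3 : r ^ ((3:ℝ) - n) = r * r ^ ((2:ℝ) - n) := by
    rw [show (3:ℝ) - n = 1 + (2 - n) by ring, Real.rpow_add hr, Real.rpow_one]
  have e1 : r ^ ((1:ℝ) - n) = r ^ ((2:ℝ) - n) / r := by
    rw [show (1:ℝ) - n = (2 - n) + (-1) by ring, Real.rpow_add hr, Real.rpow_neg_one]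
    ring
  have hW1 : W r ^ (α - 1) = W r ^ (α - 2) * W r := by
    rw [show α - 1 = (α - 2) + 1 by ring, Real.rpow_add hWrpos, Real.rpow_one]
  have hW11 : W r ^ (α - 1 - 1) = W r ^ (α - 2) := by rw [show α - 1 - 1 = α - 2 by ring]
  have hWα : W r ^ α = W r ^ (α - 2) * W r ^ 2 := by
    rw [← Real.rpow_two, ← Real.rpow_add hWrpos]; norm_num
  have hAp : A ^ p = B⁻¹ := by
    have hap : (2 - n) / (6 - 2 * n) * p = -1 := by
      rw [hp]; field_simp; ring
    rw [hAdef, ← Real.rpow_mul hBpos.le, hap, Real.rpow_neg_one]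
  have hWp : (W r ^ α) ^ p = (W r ^ 2)⁻¹ := by
    have hαp : α * p = -2 := by rw [hα, hp]; field_simp; ring
    rw [← Real.rpow_mul hWrpos.le, hαp,
      show (-2:ℝ) = -(2:ℝ) by norm_num, Real.rpow_neg hWrpos.le, Real.rpow_two]
  have hP : (A * W r ^ α) ^ p = B⁻¹ * (W r ^ 2)⁻¹ := by
    rw [Real.mul_rpow hApos.le (Real.rpow_nonneg hWrpos.le α), hAp, hWp]
  have hwrne : W r ≠ 0 := ne_of_gt hWrpos
  have key : (c2 * ((3 - n) * ((2 - n) * r ^ ((1:ℝ) - n)))) * α * W r ^ (α - 1)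
      + ((1 + c2 * ((3 - n) * r ^ ((2:ℝ) - n))) * α)
        * ((1 + c2 * ((3 - n) * r ^ ((2:ℝ) - n))) * (α - 1) * W r ^ (α - 1 - 1))
      + (n - 1) / r * G r
      + k * ((A * W r ^ α) ^ p * W r ^ α) = 0 := by
    rw [hP, hG, hW1, hW11, hWα]
    simp only
    rw [hW1]
    generalize W r ^ (α - 2) = X
    have hWval : W r = r + c2 * (r * r ^ ((2:ℝ) - n)) := by
      rw [hWdef]; simp only; rw [e3]
    rw [e1, hWval, hα, hB]
    have hWne : r + c2 * (r * r ^ ((2:ℝ) - n)) ≠ 0 := by rw [← hWval]; exact hwrne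
    have hW1ne : 1 + c2 * r ^ ((2:ℝ) - n) ≠ 0 := by
      intro h; apply hWne; linear_combination r * h
    field_simp
    ring
  have keyC := congrArg (fun x : ℝ => (x : ℂ)) key
  push_cast at keyC ⊢
  linear_combination (-(A:ℂ) * E) * keyC
end

section
/- Let n ≠ 2, 3, k > 0, c2 ≠ 0, and p = 2(3−n)/(n−2). Then u(t,r) = (c2² (n−2)²/k)^{(n−2)/(6−2n)} · r^{2−n} · exp(i c1 + i c2 r^{n−2}) satisfies i u_t = u_{rr} + ((n−1)/r) u_r + k |u|^p u for all t and all r > 0. -/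
open Real

lemma keyDeriv (c1 c2 b : ℝ) (c : ℂ) (e : ℝ) {r : ℝ} (hr : 0 < r) :
    HasDerivAt (fun s : ℝ => c * ((s ^ e : ℝ) : ℂ)
        * Complex.exp (Complex.I * c1 + Complex.I * c2 * ((s ^ b : ℝ) : ℂ)))
      (c * ((e * r ^ (e - 1) : ℝ) : ℂ)
          * Complex.exp (Complex.I * c1 + Complex.I * c2 * ((r ^ b : ℝ) : ℂ))
        + c * ((r ^ e : ℝ) : ℂ)
          * (Complex.exp (Complex.I * c1 + Complex.I * c2 * ((r ^ b : ℝ) : ℂ))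
             * (Complex.I * c2 * ((b * r ^ (b - 1) : ℝ) : ℂ)))) r := by
  have hb : HasDerivAt (fun s : ℝ => ((s ^ b : ℝ) : ℂ)) ((b * r ^ (b - 1) : ℝ) : ℂ) r :=
    (Real.hasDerivAt_rpow_const (Or.inl hr.ne')).ofReal_comp
  have hφ : HasDerivAt (fun s : ℝ => Complex.I * c1 + Complex.I * c2 * ((s ^ b : ℝ) : ℂ))
      (Complex.I * c2 * ((b * r ^ (b - 1) : ℝ) : ℂ)) r := by
    simpa using (hb.const_mul (Complex.I * c2)).const_add (Complex.I * (c1 : ℂ))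
  have hE := hφ.cexp
  have he : HasDerivAt (fun s : ℝ => c * ((s ^ e : ℝ) : ℂ)) (c * ((e * r ^ (e - 1) : ℝ) : ℂ)) r :=
    ((Real.hasDerivAt_rpow_const (Or.inl hr.ne')).ofReal_comp).const_mul c
  exact he.mul hE

theorem stmt5 (k n c1 c2 : ℝ) (hk : 0 < k) (hn2 : n ≠ 2) (hn3 : n ≠ 3) (hc2 : c2 ≠ 0) :
    ∀ t r : ℝ, 0 < r →
      gnls k (2 * (3 - n) / (n - 2)) n
        (fun _ r => (((c2 ^ 2 * (n - 2) ^ 2 / k) ^ ((n - 2) / (6 - 2 * n)) : ℝ) : ℂ)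
          * ((r ^ (2 - n) : ℝ) : ℂ)
          * Complex.exp (Complex.I * c1 + Complex.I * c2 * ((r ^ (n - 2) : ℝ) : ℂ))) t r := by
  intro t r hr
  unfold gnls
  simp only [deriv_const']
  set C : ℝ := (c2 ^ 2 * (n - 2) ^ 2 / k) ^ ((n - 2) / (6 - 2 * n)) with hCdef
  have hn2' : n - 2 ≠ 0 := sub_ne_zero.mpr hn2
  have hn3' : 6 - 2 * n ≠ 0 := by intro h; apply hn3; linarith
  have hB : 0 < c2 ^ 2 * (n - 2) ^ 2 / k := by positivity
  have hC0 : 0 < C := Real.rpow_pos_of_pos hB _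
  -- first derivative
  have hd1 : ∀ x : ℝ, 0 < x →
      HasDerivAt (fun s : ℝ => (C : ℂ) * ((s ^ (2 - n) : ℝ) : ℂ)
          * Complex.exp (Complex.I * c1 + Complex.I * c2 * ((s ^ (n - 2) : ℝ) : ℂ)))
        ((C : ℂ) * (((2 - n) * x ^ (2 - n - 1) : ℝ) : ℂ)
            * Complex.exp (Complex.I * c1 + Complex.I * c2 * ((x ^ (n - 2) : ℝ) : ℂ))
          + (C : ℂ) * ((x ^ (2 - n) : ℝ) : ℂ)
            * (Complex.exp (Complex.I * c1 + Complex.I * c2 * ((x ^ (n - 2) : ℝ) : ℂ))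
               * (Complex.I * c2 * (((n - 2) * x ^ (n - 2 - 1) : ℝ) : ℂ)))) x :=
    fun x hx => keyDeriv c1 c2 (n - 2) (C : ℂ) (2 - n) hx
  -- rewritten first derivative, in differentiable form
  set G : ℝ → ℂ := fun x =>
      ((C : ℂ) * ((2 - n : ℝ) : ℂ)) * ((x ^ (2 - n - 1) : ℝ) : ℂ)
        * Complex.exp (Complex.I * c1 + Complex.I * c2 * ((x ^ (n - 2) : ℝ) : ℂ))
      + ((C : ℂ) * Complex.I * (c2 : ℂ) * ((n - 2 : ℝ) : ℂ)) * ((x ^ (-1 : ℝ) : ℝ) : ℂ)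
        * Complex.exp (Complex.I * c1 + Complex.I * c2 * ((x ^ (n - 2) : ℝ) : ℂ)) with hGdef
  have hG : ∀ x : ℝ, 0 < x →
      ((C : ℂ) * (((2 - n) * x ^ (2 - n - 1) : ℝ) : ℂ)
          * Complex.exp (Complex.I * c1 + Complex.I * c2 * ((x ^ (n - 2) : ℝ) : ℂ))
        + (C : ℂ) * ((x ^ (2 - n) : ℝ) : ℂ)
          * (Complex.exp (Complex.I * c1 + Complex.I * c2 * ((x ^ (n - 2) : ℝ) : ℂ))
             * (Complex.I * c2 * (((n - 2) * x ^ (n - 2 - 1) : ℝ) : ℂ)))) = G x := by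
    intro x hx
    rw [hGdef]
    have hx1 : x ^ (2 - n) * x ^ (n - 2 - 1) = x ^ (-1 : ℝ) := by
      rw [← Real.rpow_add hx]; ring_nf
    simp only []
    rw [← hx1]
    push_cast
    ring
  have hev : deriv (fun s : ℝ => (C : ℂ) * ((s ^ (2 - n) : ℝ) : ℂ)
      * Complex.exp (Complex.I * c1 + Complex.I * c2 * ((s ^ (n - 2) : ℝ) : ℂ))) =ᶠ[nhds r] G := by
    filter_upwards [isOpen_Ioi.mem_nhds hr] with x hx
    rw [(hd1 x hx).deriv]
    exact hG x hx
  have hGd := (keyDeriv c1 c2 (n - 2) ((C : ℂ) * ((2 - n : ℝ) : ℂ)) (2 - n - 1) hr).add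
    (keyDeriv c1 c2 (n - 2) ((C : ℂ) * Complex.I * (c2 : ℂ) * ((n - 2 : ℝ) : ℂ)) (-1 : ℝ) hr)
  have h2 : deriv (deriv (fun s : ℝ => (C : ℂ) * ((s ^ (2 - n) : ℝ) : ℂ)
      * Complex.exp (Complex.I * c1 + Complex.I * c2 * ((s ^ (n - 2) : ℝ) : ℂ)))) r
      = deriv G r := hev.deriv_eq
  rw [h2, show deriv G r = _ from hGd.deriv, (hd1 r hr).deriv]
  have habs : ‖(C : ℂ) * ((r ^ (2 - n) : ℝ) : ℂ)
      * Complex.exp (Complex.I * c1 + Complex.I * c2 * ((r ^ (n - 2) : ℝ) : ℂ))‖ = C * r ^ (2 - n) := by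
    rw [norm_mul, norm_mul, Complex.norm_real, Complex.norm_real, Real.norm_eq_abs, Real.norm_eq_abs, Complex.norm_exp]
    have h0 : (Complex.I * c1 + Complex.I * c2 * ((r ^ (n - 2) : ℝ) : ℂ)).re = 0 := by simp
    rw [h0, Real.exp_zero, mul_one, abs_of_pos hC0, abs_of_pos (Real.rpow_pos_of_pos hr _)]
  have hpow : (C * r ^ (2 - n)) ^ (2 * (3 - n) / (n - 2))
      = C ^ (2 * (3 - n) / (n - 2)) * (r ^ (n - 2 - 1)) ^ (2 : ℕ) := by
    rw [Real.mul_rpow hC0.le (Real.rpow_pos_of_pos hr _).le]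
    congr 1
    rw [← Real.rpow_natCast (r ^ (n - 2 - 1)) 2, ← Real.rpow_mul hr.le, ← Real.rpow_mul hr.le]
    congr 1
    push_cast
    field_simp
    ring
  have hKC : k * C ^ (2 * (3 - n) / (n - 2)) = c2 ^ 2 * (n - 2) ^ 2 := by
    rw [hCdef, ← Real.rpow_mul hB.le,
      show (n - 2) / (6 - 2 * n) * (2 * (3 - n) / (n - 2)) = 1 from by rw [div_mul_div_comm, div_eq_one_iff_eq (mul_ne_zero hn3' hn2')]; ring,
      Real.rpow_one]
    field_simp
  rw [habs, hpow]
  have hrc : (r : ℂ) ≠ 0 := Complex.ofReal_ne_zero.mpr hr.ne'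
  have hr1 : (r : ℂ) * (r : ℂ)⁻¹ = 1 := mul_inv_cancel₀ hrc
  have hA : r ^ (2 - n - 1 - 1) = r ^ (2 - n - 2) := by
    rw [show (2 - n - 1 - 1 : ℝ) = 2 - n - 2 from by ring]
  have h1e : r ^ (2 - n - 1) = r ^ (2 - n - 2) * r := by
    rw [show (2 - n - 1 : ℝ) = 2 - n - 2 + 1 from by ring, Real.rpow_add hr, Real.rpow_one]
  have h0e : r ^ (2 - n) = r ^ (2 - n - 2) * r * r := by
    conv_lhs => rw [show (2 - n : ℝ) = 2 - n - 2 + 1 + 1 from by ring]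
    rw [Real.rpow_add hr, Real.rpow_add hr, Real.rpow_one]
  have e3 : r ^ (-1 : ℝ) = r ^ (2 - n - 2) * r ^ (n - 2 - 1) * r * r := by
    rw [show (-1 : ℝ) = 2 - n - 2 + (n - 2 - 1) + 1 + 1 from by ring, Real.rpow_add hr,
      Real.rpow_add hr, Real.rpow_add hr, Real.rpow_one]
  have e4 : r ^ (-1 - 1 : ℝ) = r ^ (2 - n - 2) * r ^ (n - 2 - 1) * r := by
    rw [show (-1 - 1 : ℝ) = 2 - n - 2 + (n - 2 - 1) + 1 from by ring, Real.rpow_add hr,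
      Real.rpow_add hr, Real.rpow_one]
  have hKCc : (k : ℂ) * ((C ^ (2 * (3 - n) / (n - 2)) : ℝ) : ℂ)
      = ((c2 ^ 2 * (n - 2) ^ 2 : ℝ) : ℂ) := by exact_mod_cast congrArg Complex.ofReal hKC
  rw [hA, h1e, h0e, e3, e4]
  set X := Complex.exp (Complex.I * c1 + Complex.I * c2 * ((r ^ (n - 2) : ℝ) : ℂ)) with hX
  set W : ℝ := r ^ (n - 2 - 1) with hWdef
  set A : ℝ := r ^ (2 - n - 2) with hAdef
  set Kc : ℝ := C ^ (2 * (3 - n) / (n - 2)) with hKcdef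
  clear_value C W A Kc X
  clear hCdef hWdef hAdef hKcdef hX hd1 hG hev h2 hGd hGdef habs hpow hKC hA h1e h0e e3 e4 hB hC0 G
  push_cast
  push_cast at hKCc
  linear_combination (-(((n:ℂ) - 1) * C * (2 - n) * A * X
      + ((n:ℂ) - 1) * C * A * r * Complex.I * c2 * ((n:ℂ) - 2) * W * X)) * hr1
    + (-((C:ℂ) * X * A * W ^ 2 * r ^ 2)) * hKCc
    + (-((C:ℂ) * X * A * W ^ 2 * r ^ 2 * c2 ^ 2 * ((n:ℂ) - 2) ^ 2)) * Complex.I_sq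
end

section
/- Let n ≠ 0, 2, and p = −1. Then u(t,r) = (−k r²/(2n) + c3 r^{2−n} + c2) exp(i c1) satisfies i u_t = u_{rr} + ((n−1)/r) u_r + k |u|^{−1} u on any domain where r > 0 and −k r²/(2n) + c3 r^{2−n} + c2 > 0. -/
open Real

/-- The radial gNLS equation with power `p = -1`:
`i u_t = u_rr + (m/r) u_r + k u/|u|` at a point `(t,r)`, where `m = n - 1`. -/
noncomputable def gnlsM1 (k m : ℝ) (u : ℝ → ℝ → ℂ) (t r : ℝ) : Prop :=
  Complex.I * deriv (fun s => u s r) t =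
    deriv (deriv (fun s => u t s)) r
      + ((m / r : ℝ) : ℂ) * deriv (fun s => u t s) r
      + (k : ℂ) * (u t r / ((‖u t r‖ : ℝ) : ℂ))

theorem stmt6 (k n c1 c2 c3 : ℝ) (hk : k ≠ 0) (hn0 : n ≠ 0) (hn2 : n ≠ 2) :
    ∀ t r : ℝ, 0 < r → 0 < -k * r ^ 2 / (2 * n) + c3 * (r ^ (2 - n) : ℝ) + c2 →
      gnlsM1 k (n - 1)
        (fun _ r => ((-k * r ^ 2 / (2 * n) + c3 * (r ^ (2 - n) : ℝ) + c2 : ℝ) : ℂ)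
          * Complex.exp (Complex.I * c1)) t r := by
  intro t r hr hApos
  have hrne : r ≠ 0 := hr.ne'
  set e : ℂ := Complex.exp (Complex.I * c1) with he
  set A : ℝ → ℝ := fun s => -k * s ^ 2 / (2 * n) + c3 * s ^ (2 - n) + c2 with hAdef
  set A' : ℝ → ℝ := fun s => -k * s / n + c3 * ((2 - n) * s ^ (1 - n)) with hA'def
  set A'' : ℝ → ℝ := fun s => -k / n + c3 * ((2 - n) * ((1 - n) * s ^ (-n))) with hA''def
  have hA' : ∀ s : ℝ, 0 < s → HasDerivAt A (A' s) s := by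
    intro s hs
    have h1 : HasDerivAt (fun s : ℝ => -k * s ^ 2 / (2 * n)) (-k * s / n) s := by
      have h := ((hasDerivAt_pow 2 s).const_mul (-k)).div_const (2 * n)
      refine h.congr_deriv ?_
      simp only [Nat.cast_ofNat, Nat.reduceSub, pow_one]
      ring
    have h2 : HasDerivAt (fun s : ℝ => c3 * s ^ (2 - n)) (c3 * ((2 - n) * s ^ (1 - n))) s := by
      have h := (Real.hasDerivAt_rpow_const (p := 2 - n) (Or.inl hs.ne')).const_mul c3
      have hexp : (2 : ℝ) - n - 1 = 1 - n := by ring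
      rwa [hexp] at h
    exact (h1.add h2).add_const c2
  have hA'' : HasDerivAt A' (A'' r) r := by
    have h1 : HasDerivAt (fun s : ℝ => -k * s / n) (-k / n) r := by
      have h := ((hasDerivAt_id r).const_mul (-k)).div_const n
      simpa using h
    have h2 : HasDerivAt (fun s : ℝ => c3 * ((2 - n) * s ^ (1 - n)))
        (c3 * ((2 - n) * ((1 - n) * r ^ (-n)))) r := by
      have h := ((Real.hasDerivAt_rpow_const (p := 1 - n)
        (Or.inl hrne)).const_mul (2 - n)).const_mul c3
      have hexp : (1 : ℝ) - n - 1 = -n := by ring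
      rwa [hexp] at h
    exact h1.add h2
  -- the complex-valued spatial function
  have hC1 : ∀ s : ℝ, 0 < s →
      HasDerivAt (fun s : ℝ => ((A s : ℝ) : ℂ) * e) (((A' s : ℝ) : ℂ) * e) s := by
    intro s hs
    exact ((hA' s hs).ofReal_comp).mul_const e
  have hd1 : ∀ s : ℝ, 0 < s →
      deriv (fun s : ℝ => ((A s : ℝ) : ℂ) * e) s = ((A' s : ℝ) : ℂ) * e := by
    intro s hs
    exact (hC1 s hs).deriv
  have hev : deriv (fun s : ℝ => ((A s : ℝ) : ℂ) * e)
      =ᶠ[nhds r] fun s => ((A' s : ℝ) : ℂ) * e :=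
    (eventually_gt_nhds hr).mono hd1
  have hd2 : deriv (deriv (fun s : ℝ => ((A s : ℝ) : ℂ) * e)) r = ((A'' r : ℝ) : ℂ) * e := by
    rw [hev.deriv_eq]
    exact ((hA''.ofReal_comp).mul_const e).deriv
  -- modulus
  have habs : ‖((A r : ℝ) : ℂ) * e‖ = A r := by
    rw [he, norm_mul, Complex.norm_real, Real.norm_eq_abs, Complex.norm_exp]
    have : (Complex.I * (c1 : ℂ)).re = 0 := by simp
    rw [this, Real.exp_zero, mul_one]
    exact abs_of_pos hApos
  -- the key real identity
  have hrp : r ^ ((1 : ℝ) - n) = r * r ^ (-n) := by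
    rw [show (1 : ℝ) - n = 1 + (-n) by ring, Real.rpow_add hr, Real.rpow_one]
  have key : A'' r + (n - 1) / r * A' r + k = 0 := by
    simp only [hA'def, hA''def, hrp]
    field_simp
    ring
  -- assemble
  unfold gnlsM1
  simp only [deriv_const', mul_zero]
  rw [hd2, hd1 r hr, habs]
  have hAne : ((A r : ℝ) : ℂ) ≠ 0 := Complex.ofReal_ne_zero.mpr hApos.ne'
  have hXA : ((-k * r ^ 2 / (2 * n) + c3 * r ^ (2 - n) + c2 : ℝ) : ℂ) = ((A r : ℝ) : ℂ) := rfl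
  have hdiv : ((A r : ℝ) : ℂ) * e / ((A r : ℝ) : ℂ) = e :=
    mul_div_cancel_left₀ e hAne
  rw [hXA, hdiv]
  have hc : ((A'' r : ℝ) : ℂ) + (((n - 1) / r : ℝ) : ℂ) * ((A' r : ℝ) : ℂ) + (k : ℂ) = 0 := by
    rw [← Complex.ofReal_zero, ← key]
    push_cast
    ring
  linear_combination (-e) * hc
end

section
/- Let n = 2, p = −1. Then u(t,r) = (−k r²/4 + c3 ln r + c2) exp(i c1) satisfies i u_t = u_{rr} + (1/r) u_r + k u/|u| on any domain where r > 0 and −k r²/4 + c3 ln r + c2 > 0. -/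
open Real

theorem stmt7 (k c1 c2 c3 : ℝ) (hk : k ≠ 0) :
    ∀ t r : ℝ, 0 < r → 0 < -k * r ^ 2 / 4 + c3 * Real.log r + c2 →
      gnlsM1 k 1
        (fun _ r => ((-k * r ^ 2 / 4 + c3 * Real.log r + c2 : ℝ) : ℂ)
          * Complex.exp (Complex.I * c1)) t r := by
  intro t r hr hpos
  set E : ℂ := Complex.exp (Complex.I * c1) with hE
  -- first derivative (complexified)
  have hf1 : ∀ s : ℝ, 0 < s →
      HasDerivAt (fun s : ℝ =>
          ((-k * s ^ 2 / 4 + c3 * Real.log s + c2 : ℝ) : ℂ) * E)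
        (((-k * s / 2 + c3 / s : ℝ) : ℂ) * E) s := by
    intro s hs
    have h1 : HasDerivAt (fun s : ℝ => -k * s ^ 2 / 4) (-k * s / 2) s := by
      have := ((hasDerivAt_pow 2 s).const_mul (-k)).div_const 4
      exact this.congr_deriv (by push_cast; ring)
    have h2 : HasDerivAt (fun s : ℝ => c3 * Real.log s) (c3 / s) s := by
      have := (Real.hasDerivAt_log hs.ne').const_mul c3
      exact this.congr_deriv (by ring)
    exact (((h1.add h2).add_const c2).ofReal_comp).mul_const E
  -- second derivative (complexified)
  have hf2 : HasDerivAt (fun s : ℝ => ((-k * s / 2 + c3 / s : ℝ) : ℂ) * E)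
      (((-k / 2 - c3 / r ^ 2 : ℝ) : ℂ) * E) r := by
    have h1 : HasDerivAt (fun s : ℝ => -k * s / 2) (-k / 2) r := by
      have := ((hasDerivAt_id r).const_mul (-k)).div_const 2
      exact this.congr_deriv (by ring)
    have h2 : HasDerivAt (fun s : ℝ => c3 / s) (-(c3 / r ^ 2)) r := by
      have := (hasDerivAt_inv hr.ne').const_mul c3
      simpa [div_eq_mul_inv, mul_comm, neg_div] using this
    have h3 : HasDerivAt (fun s : ℝ => -k * s / 2 + c3 / s)
        (-k / 2 - c3 / r ^ 2) r := by
      have := h1.add h2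
      exact this.congr_deriv (by ring)
    exact h3.ofReal_comp.mul_const E
  -- time derivative is zero
  have hLHS : deriv (fun s : ℝ =>
      ((-k * r ^ 2 / 4 + c3 * Real.log r + c2 : ℝ) : ℂ) * E) t = 0 :=
    deriv_const _ _
  -- first spatial derivative
  have hd1 : deriv (fun s : ℝ =>
      ((-k * s ^ 2 / 4 + c3 * Real.log s + c2 : ℝ) : ℂ) * E) r
      = ((-k * r / 2 + c3 / r : ℝ) : ℂ) * E := (hf1 r hr).deriv
  -- second spatial derivative via eventual equality of the deriv
  have hev : deriv (fun s : ℝ =>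
      ((-k * s ^ 2 / 4 + c3 * Real.log s + c2 : ℝ) : ℂ) * E)
      =ᶠ[nhds r] fun s : ℝ => ((-k * s / 2 + c3 / s : ℝ) : ℂ) * E := by
    filter_upwards [eventually_gt_nhds hr] with s hs
    exact (hf1 s hs).deriv
  have hd2 : deriv (deriv (fun s : ℝ =>
      ((-k * s ^ 2 / 4 + c3 * Real.log s + c2 : ℝ) : ℂ) * E)) r
      = ((-k / 2 - c3 / r ^ 2 : ℝ) : ℂ) * E := by
    rw [hev.deriv_eq]
    exact hf2.deriv
  -- modulus
  have habs : (‖((-k * r ^ 2 / 4 + c3 * Real.log r + c2 : ℝ) : ℂ) * E‖ : ℝ)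
      = -k * r ^ 2 / 4 + c3 * Real.log r + c2 := by
    have h0 : (Complex.I * (c1 : ℂ)).re = 0 := by simp
    rw [norm_mul, Complex.norm_real, Real.norm_eq_abs, hE, Complex.norm_exp, h0, Real.exp_zero,
      mul_one, abs_of_pos hpos]
  simp only [gnlsM1]
  rw [hLHS, hd1, hd2, habs]
  have hne : ((-k * r ^ 2 / 4 + c3 * Real.log r + c2 : ℝ) : ℂ) ≠ 0 := by
    exact_mod_cast hpos.ne'
  have hq : (((-k * r ^ 2 / 4 + c3 * Real.log r + c2 : ℝ)) : ℂ) * E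
      / (((-k * r ^ 2 / 4 + c3 * Real.log r + c2 : ℝ)) : ℂ) = E := by
    rw [mul_comm, mul_div_assoc, div_self hne, mul_one]
  rw [hq]
  push_cast
  have hrne : (r : ℂ) ≠ 0 := by exact_mod_cast hr.ne'
  field_simp
  ring
end

section
/- Let n = 0, p = −1. Then u(t,r) = (−(k/2) r² ln r + c3 r² + c2) exp(i c1) satisfies i u_t = u_{rr} − (1/r) u_r + k u/|u| on any domain where r > 0 and −(k/2) r² ln r + c3 r² + c2 > 0. -/
open Real

lemma hf_deriv (k c2 c3 : ℝ) {s : ℝ} (hs : 0 < s) :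
    HasDerivAt (fun s : ℝ => -(k / 2) * s ^ 2 * Real.log s + c3 * s ^ 2 + c2)
      (-k * s * Real.log s - (k / 2) * s + 2 * c3 * s) s := by
  have h1 : HasDerivAt (fun s : ℝ => -(k / 2) * s ^ 2 * Real.log s)
      ((-(k / 2) * (2 * s)) * Real.log s + (-(k / 2) * s ^ 2) * s⁻¹) s := by
    exact ((hasDerivAt_pow 2 s).const_mul (-(k/2))).mul (Real.hasDerivAt_log hs.ne')
      |>.congr_deriv (by ring_nf)
  have h2 : HasDerivAt (fun s : ℝ => c3 * s ^ 2) (c3 * (2 * s)) s := by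
    simpa using (hasDerivAt_pow 2 s).const_mul c3
  have := (h1.add h2).add_const c2
  refine this.congr_deriv ?_
  have hs0 : s ≠ 0 := hs.ne'
  field_simp
  ring

lemma hg_deriv (k c3 : ℝ) {s : ℝ} (hs : 0 < s) :
    HasDerivAt (fun s : ℝ => -k * s * Real.log s - (k / 2) * s + 2 * c3 * s)
      (-k * Real.log s - 3 * k / 2 + 2 * c3) s := by
  have h1 : HasDerivAt (fun s : ℝ => -k * s * Real.log s)
      ((-k) * Real.log s + (-k * s) * s⁻¹) s := by
    have := ((hasDerivAt_id s).const_mul (-k)).mul (Real.hasDerivAt_log hs.ne')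
    simp only [id_eq, mul_one] at this
    exact this
  have h2 : HasDerivAt (fun s : ℝ => (k / 2) * s) (k / 2) s := by
    simpa using (hasDerivAt_id s).const_mul (k/2)
  have h3 : HasDerivAt (fun s : ℝ => 2 * c3 * s) (2 * c3) s := by
    simpa using (hasDerivAt_id s).const_mul (2 * c3)
  have := (h1.sub h2).add h3
  refine this.congr_deriv ?_
  have hs0 : s ≠ 0 := hs.ne'
  field_simp
  ring

theorem stmt8 (k c1 c2 c3 : ℝ) (hk : k ≠ 0) :
    ∀ t r : ℝ, 0 < r → 0 < -(k / 2) * r ^ 2 * Real.log r + c3 * r ^ 2 + c2 →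
      gnlsM1 k (-1)
        (fun _ r => ((-(k / 2) * r ^ 2 * Real.log r + c3 * r ^ 2 + c2 : ℝ) : ℂ)
          * Complex.exp (Complex.I * c1)) t r := by
  intro t r hr hpos
  set e : ℂ := Complex.exp (Complex.I * c1) with he
  set f : ℝ → ℝ := fun s => -(k / 2) * s ^ 2 * Real.log s + c3 * s ^ 2 + c2 with hfdef
  set g : ℝ → ℝ := fun s => -k * s * Real.log s - (k / 2) * s + 2 * c3 * s with hgdef
  have hC : ∀ s : ℝ, 0 < s →
      HasDerivAt (fun s : ℝ => ((f s : ℝ) : ℂ) * e) ((g s : ℂ) * e) s := by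
    intro s hs
    exact ((hf_deriv k c2 c3 hs).ofReal_comp).mul_const e
  have hC2 : ∀ s : ℝ, 0 < s →
      HasDerivAt (fun s : ℝ => ((g s : ℝ) : ℂ) * e)
        (((-k * Real.log s - 3 * k / 2 + 2 * c3 : ℝ) : ℂ) * e) s := by
    intro s hs
    exact ((hg_deriv k c3 hs).ofReal_comp).mul_const e
  unfold gnlsM1
  have hdt : deriv (fun s : ℝ => ((f r : ℝ) : ℂ) * e) t = 0 := deriv_const _ _
  have hd1 : deriv (fun s : ℝ => ((f s : ℝ) : ℂ) * e) r = (g r : ℂ) * e :=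
    (hC r hr).deriv
  have hEq : deriv (fun s : ℝ => ((f s : ℝ) : ℂ) * e) =ᶠ[nhds r]
      (fun s : ℝ => ((g s : ℝ) : ℂ) * e) := by
    filter_upwards [IsOpen.mem_nhds isOpen_Ioi hr] with s hs
    exact (hC s hs).deriv
  have hd2 : deriv (deriv (fun s : ℝ => ((f s : ℝ) : ℂ) * e)) r =
      ((-k * Real.log r - 3 * k / 2 + 2 * c3 : ℝ) : ℂ) * e := by
    rw [hEq.deriv_eq]
    exact (hC2 r hr).deriv
  have habs : ‖((f r : ℝ) : ℂ) * e‖ = f r := by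
    rw [norm_mul, Complex.norm_real, Real.norm_eq_abs, abs_of_pos hpos, he, Complex.norm_exp]
    simp only [hfdef]
    norm_num
  have hfr : (f r : ℂ) ≠ 0 := by
    exact_mod_cast (Complex.ofReal_ne_zero.mpr hpos.ne')
  have hdiv : (((f r : ℝ) : ℂ) * e) / ((‖((f r : ℝ) : ℂ) * e‖ : ℝ) : ℂ) = e := by
    rw [habs, mul_comm, mul_div_assoc, div_self hfr, mul_one]
  show Complex.I * deriv (fun s : ℝ => ((f r : ℝ) : ℂ) * e) t =
      deriv (deriv (fun s : ℝ => ((f s : ℝ) : ℂ) * e)) r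
        + (((-1 : ℝ) / r : ℝ) : ℂ) * deriv (fun s : ℝ => ((f s : ℝ) : ℂ) * e) r
        + (k : ℂ) * ((((f r : ℝ) : ℂ) * e) / ((‖((f r : ℝ) : ℂ) * e‖ : ℝ) : ℂ))
  rw [hdt, hd1, hd2, hdiv, mul_zero]
  have hrC : (r : ℂ) ≠ 0 := by exact_mod_cast hr.ne'
  have : ((g r : ℝ) : ℂ) = (-k * r * Real.log r - (k / 2) * r + 2 * c3 * r : ℝ) := rfl
  rw [this]
  push_cast
  field_simp
  ring
end

section
/- Let n = 3, p = −1. Then u(t,r) = (c2/r) exp(i c1 − i k t r/c2 + i k² t³/(3 c2²)) satisfies i u_t = u_{rr} + (2/r) u_r + k u/|u| for all t and all r > 0, where c2 > 0. -/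
open Real

private noncomputable def gAux (k c1 c2 t : ℝ) : ℝ → ℂ := fun s =>
  (-(c2 : ℂ) / (s : ℂ) ^ 2 - Complex.I * (k : ℂ) * (t : ℂ) / (s : ℂ)) *
    Complex.exp (Complex.I * (c1 : ℂ) - Complex.I * (k : ℂ) * (t : ℂ) * (s : ℂ) / (c2 : ℂ)
      + Complex.I * (k : ℂ) ^ 2 * (t : ℂ) ^ 3 / (3 * (c2 : ℂ) ^ 2))

set_option maxHeartbeats 1000000 in
theorem stmt9 (k c1 c2 : ℝ) (hk : k ≠ 0) (hc2 : 0 < c2) :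
    ∀ t r : ℝ, 0 < r →
      gnlsM1 k 2
        (fun t r => ((c2 / r : ℝ) : ℂ)
          * Complex.exp (Complex.I * c1 - Complex.I * k * t * r / c2
              + Complex.I * k ^ 2 * t ^ 3 / (3 * c2 ^ 2))) t r := by
  intro t r hr
  have hrC : (r : ℂ) ≠ 0 := Complex.ofReal_ne_zero.mpr hr.ne'
  have hc2C : (c2 : ℂ) ≠ 0 := Complex.ofReal_ne_zero.mpr hc2.ne'
  set E : ℂ := Complex.exp (Complex.I * (c1 : ℂ) - Complex.I * (k : ℂ) * (t : ℂ) * (r : ℂ) / (c2 : ℂ)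
      + Complex.I * (k : ℂ) ^ 2 * (t : ℂ) ^ 3 / (3 * (c2 : ℂ) ^ 2)) with hE
  -- time derivative
  have hT : HasDerivAt (fun s : ℝ => ((c2 / r : ℝ) : ℂ) *
        Complex.exp (Complex.I * (c1 : ℂ) - Complex.I * (k : ℂ) * (s : ℂ) * (r : ℂ) / (c2 : ℂ)
          + Complex.I * (k : ℂ) ^ 2 * (s : ℂ) ^ 3 / (3 * (c2 : ℂ) ^ 2)))
      (((c2 / r : ℝ) : ℂ) * E *
        (-(Complex.I * (k : ℂ) * (r : ℂ)) / (c2 : ℂ)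
          + Complex.I * (k : ℂ) ^ 2 * (t : ℂ) ^ 2 / (c2 : ℂ) ^ 2)) t := by
    have hid : HasDerivAt (fun s : ℝ => ((s : ℝ) : ℂ)) 1 t := (hasDerivAt_id t).ofReal_comp
    have hp3 : HasDerivAt (fun s : ℝ => ((s : ℝ) : ℂ) ^ 3) (3 * (t : ℂ) ^ 2) t := by
      have := (hasDerivAt_pow 3 ((t : ℝ) : ℂ)).comp_ofReal
      norm_num at this
      exact this
    have h2 : HasDerivAt (fun s : ℝ => Complex.I * (c1 : ℂ)
          - Complex.I * (k : ℂ) * (s : ℂ) * (r : ℂ) / (c2 : ℂ)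
          + Complex.I * (k : ℂ) ^ 2 * (s : ℂ) ^ 3 / (3 * (c2 : ℂ) ^ 2))
        (0 - Complex.I * (k : ℂ) * 1 * (r : ℂ) / (c2 : ℂ)
          + Complex.I * (k : ℂ) ^ 2 * (3 * (t : ℂ) ^ 2) / (3 * (c2 : ℂ) ^ 2)) t :=
      ((hasDerivAt_const t (Complex.I * (c1 : ℂ))).sub
        (((hid.const_mul (Complex.I * (k : ℂ))).mul_const ((r : ℝ) : ℂ)).div_const ((c2 : ℝ) : ℂ))).add
        ((hp3.const_mul (Complex.I * (k : ℂ) ^ 2)).div_const (3 * (c2 : ℂ) ^ 2))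
    have h3 := h2.cexp.const_mul (((c2 / r : ℝ) : ℂ))
    refine h3.congr_deriv ?_
    rw [hE]
    generalize Complex.exp (Complex.I * (c1 : ℂ) - Complex.I * (k : ℂ) * (t : ℂ) * (r : ℂ) / (c2 : ℂ)
      + Complex.I * (k : ℂ) ^ 2 * (t : ℂ) ^ 3 / (3 * (c2 : ℂ) ^ 2)) = X
    push_cast
    field_simp [hrC, hc2C]
    ring
  -- first radial derivative (as a function, on s > 0)
  have hg : ∀ s : ℝ, 0 < s →
      HasDerivAt (fun x : ℝ => ((c2 / x : ℝ) : ℂ) *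
          Complex.exp (Complex.I * (c1 : ℂ) - Complex.I * (k : ℂ) * (t : ℂ) * (x : ℂ) / (c2 : ℂ)
            + Complex.I * (k : ℂ) ^ 2 * (t : ℂ) ^ 3 / (3 * (c2 : ℂ) ^ 2)))
        (gAux k c1 c2 t s) s := by
    intro s hs
    have hsC : (s : ℂ) ≠ 0 := Complex.ofReal_ne_zero.mpr hs.ne'
    have hid : HasDerivAt (fun x : ℝ => ((x : ℝ) : ℂ)) 1 s := (hasDerivAt_id s).ofReal_comp
    have h1 : HasDerivAt (fun x : ℝ => ((c2 / x : ℝ) : ℂ)) (((0 * s - c2 * 1) / s ^ 2 : ℝ) : ℂ) s :=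
      ((hasDerivAt_const s c2).div (hasDerivAt_id s) hs.ne').ofReal_comp
    have h2 : HasDerivAt (fun x : ℝ => Complex.I * (c1 : ℂ)
          - Complex.I * (k : ℂ) * (t : ℂ) * (x : ℂ) / (c2 : ℂ)
          + Complex.I * (k : ℂ) ^ 2 * (t : ℂ) ^ 3 / (3 * (c2 : ℂ) ^ 2))
        (0 - Complex.I * (k : ℂ) * (t : ℂ) * 1 / (c2 : ℂ) + 0) s :=
      ((hasDerivAt_const s (Complex.I * (c1 : ℂ))).sub
        ((hid.const_mul (Complex.I * (k : ℂ) * (t : ℂ))).div_const ((c2 : ℝ) : ℂ))).add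
        (hasDerivAt_const s (Complex.I * (k : ℂ) ^ 2 * (t : ℂ) ^ 3 / (3 * (c2 : ℂ) ^ 2)))
    have h3 := h1.mul h2.cexp
    refine h3.congr_deriv ?_
    simp only [gAux]
    generalize Complex.exp (Complex.I * (c1 : ℂ) - Complex.I * (k : ℂ) * (t : ℂ) * (s : ℂ) / (c2 : ℂ)
      + Complex.I * (k : ℂ) ^ 2 * (t : ℂ) ^ 3 / (3 * (c2 : ℂ) ^ 2)) = X
    push_cast
    field_simp [hsC, hc2C]
    ring
  -- second radial derivative
  have hG : HasDerivAt (gAux k c1 c2 t)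
      ((2 * (c2 : ℂ) / (r : ℂ) ^ 3 + Complex.I * (k : ℂ) * (t : ℂ) / (r : ℂ) ^ 2) * E
        + (-(c2 : ℂ) / (r : ℂ) ^ 2 - Complex.I * (k : ℂ) * (t : ℂ) / (r : ℂ)) * E *
          (-(Complex.I * (k : ℂ) * (t : ℂ)) / (c2 : ℂ))) r := by
    have hid : HasDerivAt (fun x : ℝ => ((x : ℝ) : ℂ)) 1 r := (hasDerivAt_id r).ofReal_comp
    have hp2 : HasDerivAt (fun x : ℝ => ((x : ℝ) : ℂ) ^ 2) (2 * (r : ℂ)) r := by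
      have := (hasDerivAt_pow 2 ((r : ℝ) : ℂ)).comp_ofReal
      norm_num at this
      exact this
    have hscC : ((r : ℂ)) ^ 2 ≠ 0 := pow_ne_zero 2 hrC
    have hA : HasDerivAt (fun x : ℝ => -(c2 : ℂ) / ((x : ℝ) : ℂ) ^ 2
          - Complex.I * (k : ℂ) * (t : ℂ) / ((x : ℝ) : ℂ))
        ((0 * (r : ℂ) ^ 2 - -(c2 : ℂ) * (2 * (r : ℂ))) / ((r : ℂ) ^ 2) ^ 2
          - (0 * (r : ℂ) - Complex.I * (k : ℂ) * (t : ℂ) * 1) / (r : ℂ) ^ 2) r :=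
      ((hasDerivAt_const r (-(c2 : ℂ))).div hp2 hscC).sub
        ((hasDerivAt_const r (Complex.I * (k : ℂ) * (t : ℂ))).div hid hrC)
    have h2 : HasDerivAt (fun x : ℝ => Complex.I * (c1 : ℂ)
          - Complex.I * (k : ℂ) * (t : ℂ) * (x : ℂ) / (c2 : ℂ)
          + Complex.I * (k : ℂ) ^ 2 * (t : ℂ) ^ 3 / (3 * (c2 : ℂ) ^ 2))
        (0 - Complex.I * (k : ℂ) * (t : ℂ) * 1 / (c2 : ℂ) + 0) r :=
      ((hasDerivAt_const r (Complex.I * (c1 : ℂ))).sub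
        ((hid.const_mul (Complex.I * (k : ℂ) * (t : ℂ))).div_const ((c2 : ℝ) : ℂ))).add
        (hasDerivAt_const r (Complex.I * (k : ℂ) ^ 2 * (t : ℂ) ^ 3 / (3 * (c2 : ℂ) ^ 2)))
    have h3 := hA.mul h2.cexp
    have h4 : HasDerivAt (gAux k c1 c2 t) _ r := h3
    convert h4 using 1
    rw [hE]
    generalize Complex.exp (Complex.I * (c1 : ℂ) - Complex.I * (k : ℂ) * (t : ℂ) * (r : ℂ) / (c2 : ℂ)
      + Complex.I * (k : ℂ) ^ 2 * (t : ℂ) ^ 3 / (3 * (c2 : ℂ) ^ 2)) = X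
    field_simp [hrC, hc2C]
    ring
  -- eventually equality for the second derivative
  have hev : deriv (fun x : ℝ => ((c2 / x : ℝ) : ℂ) *
      Complex.exp (Complex.I * (c1 : ℂ) - Complex.I * (k : ℂ) * (t : ℂ) * (x : ℂ) / (c2 : ℂ)
        + Complex.I * (k : ℂ) ^ 2 * (t : ℂ) ^ 3 / (3 * (c2 : ℂ) ^ 2)))
      =ᶠ[nhds r] gAux k c1 c2 t := by
    filter_upwards [eventually_gt_nhds hr] with s hs
    exact (hg s hs).deriv
  -- absolute value
  have habs : (‖((c2 / r : ℝ) : ℂ) * E‖ : ℝ) = c2 / r := by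
    rw [norm_mul, Complex.norm_real, Real.norm_eq_abs, abs_of_pos (div_pos hc2 hr), hE,
      show (Complex.I * (c1 : ℂ) - Complex.I * (k : ℂ) * (t : ℂ) * (r : ℂ) / (c2 : ℂ)
        + Complex.I * (k : ℂ) ^ 2 * (t : ℂ) ^ 3 / (3 * (c2 : ℂ) ^ 2))
        = ((c1 - k * t * r / c2 + k ^ 2 * t ^ 3 / (3 * c2 ^ 2) : ℝ) : ℂ) * Complex.I from by
          push_cast; ring, Complex.norm_exp_ofReal_mul_I, mul_one]
  simp only [gnlsM1]
  rw [hT.deriv, hev.deriv_eq, hG.deriv, (hg r hr).deriv, habs]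
  simp only [gAux, ← hE]
  have hEne : E ≠ 0 := Complex.exp_ne_zero _
  push_cast
  field_simp [hrC, hc2C]
  ring_nf
  simp only [Complex.I_sq]
  field_simp [hrC, hc2C]
  ring
end

section
/- Let n = 3, p = −1, c2 > 0. Then u(t,r) = (c2/(r t^{1/2})) · exp(i c1 − i r²/(4t) − 2 i k r t^{3/2}/(5 c2) + i k² t⁴/(25 c2²)) satisfies i u_t = u_{rr} + (2/r) u_r + k u/|u| on the domain t > 0, r > 0. -/
open Real

lemma polarDeriv {a b φ : ℝ → ℝ} {a' b' φ' : ℝ} {x : ℝ}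
    (ha : HasDerivAt a a' x) (hb : HasDerivAt b b' x) (hφ : HasDerivAt φ φ' x) :
    HasDerivAt (fun s => (((a s : ℝ) : ℂ) + ((b s : ℝ) : ℂ) * Complex.I) *
        Complex.exp (Complex.I * ((φ s : ℝ) : ℂ)))
      ((((a' - b x * φ' : ℝ) : ℂ) + ((b' + a x * φ' : ℝ) : ℂ) * Complex.I) *
        Complex.exp (Complex.I * ((φ x : ℝ) : ℂ))) x := by
  have h := ((ha.ofReal_comp).add ((hb.ofReal_comp).mul_const Complex.I)).mul
    (((hφ.ofReal_comp).const_mul Complex.I).cexp)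
  refine h.congr_deriv ?_; symm
  simp only [Pi.add_apply]
  push_cast
  linear_combination (-(b x : ℂ) * (φ' : ℂ) * Complex.exp (Complex.I * ((φ x : ℝ) : ℂ))) * Complex.I_sq

set_option maxHeartbeats 1000000 in
theorem stmt10 (k c1 c2 : ℝ) (hk : k ≠ 0) (hc2 : 0 < c2) :
    ∀ t r : ℝ, 0 < t → 0 < r →
      gnlsM1 k 2
        (fun t r => ((c2 / (r * (t ^ ((1 : ℝ) / 2) : ℝ)) : ℝ) : ℂ)
          * Complex.exp (Complex.I * c1 - Complex.I * r ^ 2 / (4 * t)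
              - 2 * Complex.I * k * r * ((t ^ ((3 : ℝ) / 2) : ℝ) : ℂ) / (5 * c2)
              + Complex.I * k ^ 2 * t ^ 4 / (25 * c2 ^ 2))) t r := by
  intro t r ht hr
  obtain ⟨σ, hσ, rfl⟩ : ∃ σ : ℝ, 0 < σ ∧ σ ^ 2 = t :=
    ⟨Real.sqrt t, Real.sqrt_pos.2 ht, Real.sq_sqrt ht.le⟩
  have hσne : σ ≠ 0 := hσ.ne'
  have hrne : r ≠ 0 := hr.ne'
  have hc2ne : c2 ≠ 0 := hc2.ne'
  have htne : (σ:ℝ)^2 ≠ 0 := by positivity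
  have hgen : ∀ y : ℝ, ((σ^2 : ℝ) ^ (y : ℝ)) = σ ^ (2*y) := by
    intro y
    rw [← Real.rpow_natCast σ 2, ← Real.rpow_mul hσ.le]
    norm_num
  have h1 : ((σ^2:ℝ) ^ ((1:ℝ)/2)) = σ := by
    rw [hgen]; norm_num
  have h2 : ((σ^2:ℝ) ^ ((3:ℝ)/2)) = σ^3 := by
    rw [hgen]; norm_num
  have h3 : ((σ^2:ℝ) ^ ((1:ℝ)/2 - 1)) = σ⁻¹ := by
    rw [hgen]
    norm_num [Real.rpow_neg_one]
  have h4 : ((σ^2:ℝ) ^ ((3:ℝ)/2 - 1)) = σ := by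
    rw [hgen]; norm_num
  simp only [gnlsM1]
  -- the common phase
  -- r-direction polar rewrite
  have hfr : (fun s : ℝ => ((c2 / (s * (σ^2) ^ ((1:ℝ)/2)) : ℝ) : ℂ)
          * Complex.exp (Complex.I * c1 - Complex.I * s ^ 2 / (4 * (σ^2:ℝ))
              - 2 * Complex.I * k * s * (((σ^2:ℝ) ^ ((3 : ℝ) / 2) : ℝ) : ℂ) / (5 * c2)
              + Complex.I * k ^ 2 * (σ^2:ℝ) ^ 4 / (25 * c2 ^ 2)))
      = fun s : ℝ => (((c2/(s*σ) : ℝ) : ℂ) + (((0:ℝ) : ℝ) : ℂ) * Complex.I) *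
          Complex.exp (Complex.I *
            ((c1 - s^2/(4*σ^2) - 2*k*s*σ^3/(5*c2) + k^2*(σ^2)^4/(25*c2^2) : ℝ) : ℂ)) := by
    funext s
    rw [h1]
    rw [show (Complex.I * c1 - Complex.I * (s:ℝ) ^ 2 / (4 * ((σ^2:ℝ):ℂ))
              - 2 * Complex.I * k * s * (((σ^2:ℝ) ^ ((3 : ℝ) / 2) : ℝ) : ℂ) / (5 * c2)
              + Complex.I * k ^ 2 * ((σ^2:ℝ):ℂ) ^ 4 / (25 * c2 ^ 2))
          = Complex.I *
            ((c1 - s^2/(4*σ^2) - 2*k*s*σ^3/(5*c2) + k^2*(σ^2)^4/(25*c2^2) : ℝ) : ℂ) from by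
      rw [h2]; push_cast; ring]
    push_cast
    ring
  -- first derivative in r, for all s > 0
  have hder1 : ∀ s : ℝ, 0 < s → HasDerivAt
      (fun s : ℝ => ((c2 / (s * (σ^2) ^ ((1:ℝ)/2)) : ℝ) : ℂ)
          * Complex.exp (Complex.I * c1 - Complex.I * s ^ 2 / (4 * (σ^2:ℝ))
              - 2 * Complex.I * k * s * (((σ^2:ℝ) ^ ((3 : ℝ) / 2) : ℝ) : ℂ) / (5 * c2)
              + Complex.I * k ^ 2 * (σ^2:ℝ) ^ 4 / (25 * c2 ^ 2)))
      ((((-c2/(s^2*σ) : ℝ)) + ((c2/(s*σ) * (-s/(2*σ^2) - 2*k*σ^3/(5*c2)) : ℝ) : ℂ) * Complex.I) *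
        Complex.exp (Complex.I *
            ((c1 - s^2/(4*σ^2) - 2*k*s*σ^3/(5*c2) + k^2*(σ^2)^4/(25*c2^2) : ℝ) : ℂ))) s := by
    intro s hs
    rw [hfr]
    have ha : HasDerivAt (fun y : ℝ => c2/(y*σ)) (-c2/(s^2*σ)) s := by
      have h := (hasDerivAt_const s c2).div ((hasDerivAt_id s).mul_const σ)
        (mul_ne_zero hs.ne' hσne)
      refine h.congr_deriv ?_; symm
      simp only [id]
      field_simp
      ring
    have hb : HasDerivAt (fun _ : ℝ => (0:ℝ)) 0 s := hasDerivAt_const s 0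
    have hφ : HasDerivAt (fun y : ℝ => c1 - y^2/(4*σ^2) - 2*k*y*σ^3/(5*c2) + k^2*(σ^2)^4/(25*c2^2))
        (-s/(2*σ^2) - 2*k*σ^3/(5*c2)) s := by
      have h := (((hasDerivAt_const s c1).sub ((hasDerivAt_pow 2 s).div_const (4*σ^2))).sub
        ((((hasDerivAt_id s).const_mul (2*k)).mul_const (σ^3)).div_const (5*c2))).add
        (hasDerivAt_const s (k^2*(σ^2)^4/(25*c2^2)))
      refine h.congr_deriv ?_; symm
      field_simp
      ring
    have h := polarDeriv ha hb hφ
    refine h.congr_deriv ?_; symm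
    push_cast
    ring
  -- eventual equality of the derivative with the explicit formula
  have hev : deriv (fun s : ℝ => ((c2 / (s * (σ^2) ^ ((1:ℝ)/2)) : ℝ) : ℂ)
          * Complex.exp (Complex.I * c1 - Complex.I * s ^ 2 / (4 * (σ^2:ℝ))
              - 2 * Complex.I * k * s * (((σ^2:ℝ) ^ ((3 : ℝ) / 2) : ℝ) : ℂ) / (5 * c2)
              + Complex.I * k ^ 2 * (σ^2:ℝ) ^ 4 / (25 * c2 ^ 2)))
      =ᶠ[nhds r] (fun s : ℝ =>
        ((((-c2/(s^2*σ) : ℝ)) + ((c2/(s*σ) * (-s/(2*σ^2) - 2*k*σ^3/(5*c2)) : ℝ) : ℂ) * Complex.I) *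
        Complex.exp (Complex.I *
            ((c1 - s^2/(4*σ^2) - 2*k*s*σ^3/(5*c2) + k^2*(σ^2)^4/(25*c2^2) : ℝ) : ℂ)))) := by
    filter_upwards [eventually_gt_nhds hr] with s hs
    exact (hder1 s hs).deriv
  -- second derivative in r
  have hd2 : deriv (deriv (fun s : ℝ => ((c2 / (s * (σ^2) ^ ((1:ℝ)/2)) : ℝ) : ℂ)
          * Complex.exp (Complex.I * c1 - Complex.I * s ^ 2 / (4 * (σ^2:ℝ))
              - 2 * Complex.I * k * s * (((σ^2:ℝ) ^ ((3 : ℝ) / 2) : ℝ) : ℂ) / (5 * c2)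
              + Complex.I * k ^ 2 * (σ^2:ℝ) ^ 4 / (25 * c2 ^ 2)))) r
      = ((((2*c2/(r^3*σ) - (c2/(r*σ) * (-r/(2*σ^2) - 2*k*σ^3/(5*c2))) * (-r/(2*σ^2) - 2*k*σ^3/(5*c2)) : ℝ)) : ℂ)
          + ((((-c2/(r^2*σ)) * (-r/(2*σ^2) - 2*k*σ^3/(5*c2)) + c2/(r*σ) * (-1/(2*σ^2))
              + (-c2/(r^2*σ)) * (-r/(2*σ^2) - 2*k*σ^3/(5*c2)) : ℝ)) : ℂ) * Complex.I) *
        Complex.exp (Complex.I *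
            ((c1 - r^2/(4*σ^2) - 2*k*r*σ^3/(5*c2) + k^2*(σ^2)^4/(25*c2^2) : ℝ) : ℂ)) := by
    rw [hev.deriv_eq]
    have hA : HasDerivAt (fun y : ℝ => -c2/(y^2*σ)) (2*c2/(r^3*σ)) r := by
      have h := (hasDerivAt_const r (-c2)).div ((hasDerivAt_pow 2 r).mul_const σ)
        (mul_ne_zero (pow_ne_zero 2 hrne) hσne)
      refine h.congr_deriv ?_; symm
      field_simp
      ring
    have hB : HasDerivAt (fun y : ℝ => c2/(y*σ) * (-y/(2*σ^2) - 2*k*σ^3/(5*c2)))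
        ((-c2/(r^2*σ)) * (-r/(2*σ^2) - 2*k*σ^3/(5*c2)) + c2/(r*σ) * (-1/(2*σ^2))) r := by
      have ha : HasDerivAt (fun y : ℝ => c2/(y*σ)) (-c2/(r^2*σ)) r := by
        have h := (hasDerivAt_const r c2).div ((hasDerivAt_id r).mul_const σ)
          (mul_ne_zero hrne hσne)
        refine h.congr_deriv ?_; symm
        simp only [id]
        field_simp
        ring
      have hlin : HasDerivAt (fun y : ℝ => -y/(2*σ^2) - 2*k*σ^3/(5*c2)) (-1/(2*σ^2)) r := by
        have h := (((hasDerivAt_id r).neg).div_const (2*σ^2)).sub_const (2*k*σ^3/(5*c2))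
        exact h
      exact ha.mul hlin
    have hφ : HasDerivAt (fun y : ℝ => c1 - y^2/(4*σ^2) - 2*k*y*σ^3/(5*c2) + k^2*(σ^2)^4/(25*c2^2))
        (-r/(2*σ^2) - 2*k*σ^3/(5*c2)) r := by
      have h := (((hasDerivAt_const r c1).sub ((hasDerivAt_pow 2 r).div_const (4*σ^2))).sub
        ((((hasDerivAt_id r).const_mul (2*k)).mul_const (σ^3)).div_const (5*c2))).add
        (hasDerivAt_const r (k^2*(σ^2)^4/(25*c2^2)))
      refine h.congr_deriv ?_; symm
      field_simp
      ring
    have h := (polarDeriv hA hB hφ).deriv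
    rw [h]
  -- t-direction
  have hft : (fun s : ℝ => ((c2 / (r * s ^ ((1:ℝ)/2)) : ℝ) : ℂ)
          * Complex.exp (Complex.I * c1 - Complex.I * r ^ 2 / (4 * (s:ℝ))
              - 2 * Complex.I * k * r * (((s:ℝ) ^ ((3 : ℝ) / 2) : ℝ) : ℂ) / (5 * c2)
              + Complex.I * k ^ 2 * (s:ℝ) ^ 4 / (25 * c2 ^ 2)))
      = fun s : ℝ => (((c2/(r * s ^ ((1:ℝ)/2)) : ℝ) : ℂ) + (((0:ℝ) : ℝ) : ℂ) * Complex.I) *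
          Complex.exp (Complex.I *
            ((c1 - r^2/(4*s) - 2*k*r*(s ^ ((3:ℝ)/2))/(5*c2) + k^2*s^4/(25*c2^2) : ℝ) : ℂ)) := by
    funext s
    rw [show (Complex.I * c1 - Complex.I * (r:ℝ) ^ 2 / (4 * ((s:ℝ):ℂ))
              - 2 * Complex.I * k * r * (((s:ℝ) ^ ((3 : ℝ) / 2) : ℝ) : ℂ) / (5 * c2)
              + Complex.I * k ^ 2 * ((s:ℝ):ℂ) ^ 4 / (25 * c2 ^ 2))
          = Complex.I *
            ((c1 - r^2/(4*s) - 2*k*r*(s ^ ((3:ℝ)/2))/(5*c2) + k^2*s^4/(25*c2^2) : ℝ) : ℂ) from by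
      push_cast; ring]
    push_cast
    ring
  have hdt : HasDerivAt (fun s : ℝ => ((c2 / (r * s ^ ((1:ℝ)/2)) : ℝ) : ℂ)
          * Complex.exp (Complex.I * c1 - Complex.I * r ^ 2 / (4 * (s:ℝ))
              - 2 * Complex.I * k * r * (((s:ℝ) ^ ((3 : ℝ) / 2) : ℝ) : ℂ) / (5 * c2)
              + Complex.I * k ^ 2 * (s:ℝ) ^ 4 / (25 * c2 ^ 2)))
      ((((-c2/(2*r*σ^3) : ℝ)) + ((c2/(r*σ) * (r^2/(4*σ^4) - 3*k*r*σ/(5*c2) + 4*k^2*σ^6/(25*c2^2)) : ℝ) : ℂ) * Complex.I) *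
        Complex.exp (Complex.I *
            ((c1 - r^2/(4*σ^2) - 2*k*r*σ^3/(5*c2) + k^2*(σ^2)^4/(25*c2^2) : ℝ) : ℂ))) (σ^2) := by
    rw [hft]
    have hα : HasDerivAt (fun y : ℝ => c2/(r * y ^ ((1:ℝ)/2))) (-c2/(2*r*σ^3)) (σ^2) := by
      have h := (hasDerivAt_const (σ^2) c2).div
        ((Real.hasDerivAt_rpow_const (p := (1:ℝ)/2) (Or.inl htne)).const_mul r)
        (by rw [h1]; exact mul_ne_zero hrne hσne)
      refine h.congr_deriv ?_; symm
      rw [h1, h3]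
      field_simp
      ring
    have hb : HasDerivAt (fun _ : ℝ => (0:ℝ)) 0 (σ^2) := hasDerivAt_const _ 0
    have hψ : HasDerivAt (fun y : ℝ => c1 - r^2/(4*y) - 2*k*r*(y ^ ((3:ℝ)/2))/(5*c2) + k^2*y^4/(25*c2^2))
        (r^2/(4*σ^4) - 3*k*r*σ/(5*c2) + 4*k^2*σ^6/(25*c2^2)) (σ^2) := by
      have h := (((hasDerivAt_const (σ^2) c1).sub
          ((hasDerivAt_const (σ^2) (r^2)).div ((hasDerivAt_id (σ^2)).const_mul 4)
            (by positivity))).sub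
        (((Real.hasDerivAt_rpow_const (p := (3:ℝ)/2) (Or.inl htne)).const_mul (2*k*r)).div_const (5*c2))).add
        (((hasDerivAt_pow 4 (σ^2)).const_mul (k^2)).div_const (25*c2^2))
      refine h.congr_deriv ?_; symm
      simp only [id]
      rw [h4]
      field_simp
      ring
    have h := polarDeriv hα hb hψ
    refine h.congr_deriv ?_; symm
    rw [h1, h2]
    push_cast
    ring
  -- the u-term
  have hu : ((c2 / (r * (σ^2) ^ ((1:ℝ)/2)) : ℝ) : ℂ)
          * Complex.exp (Complex.I * c1 - Complex.I * r ^ 2 / (4 * ((σ^2:ℝ):ℂ))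
              - 2 * Complex.I * k * r * (((σ^2:ℝ) ^ ((3 : ℝ) / 2) : ℝ) : ℂ) / (5 * c2)
              + Complex.I * k ^ 2 * ((σ^2:ℝ):ℂ) ^ 4 / (25 * c2 ^ 2))
      = ((c2/(r*σ) : ℝ) : ℂ) * Complex.exp (Complex.I *
            ((c1 - r^2/(4*σ^2) - 2*k*r*σ^3/(5*c2) + k^2*(σ^2)^4/(25*c2^2) : ℝ) : ℂ)) := by
    rw [h1, show (Complex.I * c1 - Complex.I * (r:ℝ) ^ 2 / (4 * ((σ^2:ℝ):ℂ))
              - 2 * Complex.I * k * r * (((σ^2:ℝ) ^ ((3 : ℝ) / 2) : ℝ) : ℂ) / (5 * c2)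
              + Complex.I * k ^ 2 * ((σ^2:ℝ):ℂ) ^ 4 / (25 * c2 ^ 2))
          = Complex.I *
            ((c1 - r^2/(4*σ^2) - 2*k*r*σ^3/(5*c2) + k^2*(σ^2)^4/(25*c2^2) : ℝ) : ℂ) from by
      rw [h2]; push_cast; ring]
  have hCpos : (0:ℝ) < c2/(r*σ) := by positivity
  have hCne : ((c2/(r*σ) : ℝ) : ℂ) ≠ 0 := Complex.ofReal_ne_zero.2 hCpos.ne'
  have habs : ‖(((c2/(r*σ) : ℝ) : ℂ) * Complex.exp (Complex.I *
            ((c1 - r^2/(4*σ^2) - 2*k*r*σ^3/(5*c2) + k^2*(σ^2)^4/(25*c2^2) : ℝ) : ℂ)))‖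
      = c2/(r*σ) := by
    rw [norm_mul, Complex.norm_real, Complex.norm_exp]
    have hre0 : ∀ x : ℝ, (Complex.I * (x:ℂ)).re = 0 := fun x => by simp
    rw [hre0]
    rw [Real.exp_zero, mul_one, Real.norm_eq_abs, abs_of_pos hCpos]
  rw [hdt.deriv, hd2, (hder1 r hr).deriv, hu, habs, mul_div_cancel_left₀ _ hCne]
  set E : ℂ := Complex.exp (Complex.I *
            ((c1 - r^2/(4*σ^2) - 2*k*r*σ^3/(5*c2) + k^2*(σ^2)^4/(25*c2^2) : ℝ) : ℂ)) with hE
  have hre : -(c2/(r*σ) * (r^2/(4*σ^4) - 3*k*r*σ/(5*c2) + 4*k^2*σ^6/(25*c2^2)))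
      = (2*c2/(r^3*σ) - (c2/(r*σ)*(-r/(2*σ^2) - 2*k*σ^3/(5*c2)))*(-r/(2*σ^2) - 2*k*σ^3/(5*c2)))
        + 2/r*(-c2/(r^2*σ)) + k := by
    field_simp
    ring
  have him : (-c2/(2*r*σ^3))
      = ((-c2/(r^2*σ))*(-r/(2*σ^2) - 2*k*σ^3/(5*c2)) + c2/(r*σ)*(-1/(2*σ^2))
          + (-c2/(r^2*σ))*(-r/(2*σ^2) - 2*k*σ^3/(5*c2)))
        + 2/r*(c2/(r*σ)*(-r/(2*σ^2) - 2*k*σ^3/(5*c2))) := by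
    field_simp
    ring
  have hreC := congrArg (fun x : ℝ => (x:ℂ)) hre
  have himC := congrArg (fun x : ℝ => (x:ℂ)) him
  push_cast at hreC himC ⊢
  linear_combination E * hreC + (Complex.I*E) * himC
    + (((c2:ℂ)/(↑r*↑σ) * (↑r^2/(4*↑σ^4) - 3*↑k*↑r*↑σ/(5*↑c2) + 4*↑k^2*↑σ^6/(25*↑c2^2))) * E) * Complex.I_sq
end

section
/- Let n satisfy n² − n − 4 = 0, let p = 4/n, and let k > 0. Then u(t,r) = (c2² (8 − 3n)/k)^{n/4} · r^{2−n} t^{−2+n/2} · exp(i c1 − i r²/(4t) + i c2 r^{n−2} t^{2−n}) satisfies i u_t = u_{rr} + ((n−1)/r) u_r + k |u|^{4/n} u on the domain t > 0, r > 0, for any real c1 and c2 with c2² (8−3n)/k > 0. -/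
open Real

lemma key (C d0 q1 q2 q3 : ℂ) (e1 e2 : ℝ) {s : ℝ} (hs : 0 < s) :
    HasDerivAt (fun x : ℝ => C * ((x ^ e1 : ℝ) : ℂ) *
        Complex.exp (d0 + q1 * (x:ℂ)⁻¹ + q2 * (x:ℂ)^2 + q3 * ((x ^ e2 : ℝ) : ℂ)))
      (C * ((s ^ e1 : ℝ) : ℂ) *
        Complex.exp (d0 + q1 * (s:ℂ)⁻¹ + q2 * (s:ℂ)^2 + q3 * ((s ^ e2 : ℝ) : ℂ)) *
        (((e1 : ℝ) : ℂ) * (s:ℂ)⁻¹ - q1 * ((s:ℂ)^2)⁻¹ + 2 * q2 * (s:ℂ)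
          + q3 * ((e2 : ℝ) : ℂ) * ((s ^ e2 : ℝ) : ℂ) * (s:ℂ)⁻¹)) s := by
  have hsne : (s:ℂ) ≠ 0 := by exact_mod_cast hs.ne'
  have hof : HasDerivAt (fun x : ℝ => ((x:ℝ):ℂ)) 1 s := by
    simpa using (hasDerivAt_id s).ofReal_comp
  have hx1 : HasDerivAt (fun x : ℝ => ((x ^ e1 : ℝ) : ℂ)) ((e1 * s ^ (e1 - 1) : ℝ) : ℂ) s :=
    (Real.hasDerivAt_rpow_const (Or.inl hs.ne')).ofReal_comp
  have hx2 : HasDerivAt (fun x : ℝ => ((x ^ e2 : ℝ) : ℂ)) ((e2 * s ^ (e2 - 1) : ℝ) : ℂ) s :=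
    (Real.hasDerivAt_rpow_const (Or.inl hs.ne')).ofReal_comp
  have hinv : HasDerivAt (fun x : ℝ => ((x:ℂ))⁻¹) (-((s:ℂ)^2)⁻¹) s :=
    (hasDerivAt_inv hsne).comp_ofReal
  have hsq : HasDerivAt (fun x : ℝ => ((x:ℂ))^2) (2 * (s:ℂ)) s := by
    simpa using (hasDerivAt_pow 2 ((s:ℝ):ℂ)).comp_ofReal
  have hP : HasDerivAt (fun x : ℝ => d0 + q1 * (x:ℂ)⁻¹ + q2 * (x:ℂ)^2 + q3 * ((x ^ e2 : ℝ) : ℂ))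
      (q1 * (-((s:ℂ)^2)⁻¹) + q2 * (2 * (s:ℂ)) + q3 * ((e2 * s ^ (e2 - 1) : ℝ) : ℂ)) s := by
    exact (((hinv.const_mul q1).const_add d0).add (hsq.const_mul q2)).add
      (hx2.const_mul q3)
  have H := (hx1.const_mul C).mul hP.cexp
  convert H using 1
  · rfl
  · rfl
  have h1 : s ^ (e1 - 1) = s ^ e1 / s := by rw [Real.rpow_sub hs, Real.rpow_one]
  have h2 : s ^ (e2 - 1) = s ^ e2 / s := by rw [Real.rpow_sub hs, Real.rpow_one]
  rw [h1, h2]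
  push_cast
  ring

lemma key2 (q1 q2 q3 : ℂ) (e1 e2 : ℝ) {s : ℝ} (hs : 0 < s) :
    HasDerivAt (fun x : ℝ => ((e1 : ℝ) : ℂ) * (x:ℂ)⁻¹ - q1 * ((x:ℂ)^2)⁻¹ + 2 * q2 * (x:ℂ)
          + q3 * ((e2 : ℝ) : ℂ) * ((x ^ e2 : ℝ) : ℂ) * (x:ℂ)⁻¹)
      (-(((e1 : ℝ) : ℂ) * ((s:ℂ)^2)⁻¹) + 2 * q1 * (s:ℂ) * (((s:ℂ)^2)^2)⁻¹ + 2 * q2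
          + q3 * ((e2 : ℝ) : ℂ) * (((e2 : ℝ) : ℂ) * ((s ^ e2 : ℝ) : ℂ) * ((s:ℂ)^2)⁻¹
            - ((s ^ e2 : ℝ) : ℂ) * ((s:ℂ)^2)⁻¹)) s := by
  have hsne : (s:ℂ) ≠ 0 := by exact_mod_cast hs.ne'
  have hof : HasDerivAt (fun x : ℝ => ((x:ℝ):ℂ)) 1 s := by
    simpa using (hasDerivAt_id s).ofReal_comp
  have hx2 : HasDerivAt (fun x : ℝ => ((x ^ e2 : ℝ) : ℂ)) ((e2 * s ^ (e2 - 1) : ℝ) : ℂ) s :=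
    (Real.hasDerivAt_rpow_const (Or.inl hs.ne')).ofReal_comp
  have hinv : HasDerivAt (fun x : ℝ => ((x:ℂ))⁻¹) (-((s:ℂ)^2)⁻¹) s :=
    (hasDerivAt_inv hsne).comp_ofReal
  have hsq : HasDerivAt (fun x : ℝ => ((x:ℂ))^2) (2 * (s:ℂ)) s := by
    simpa using (hasDerivAt_pow 2 ((s:ℝ):ℂ)).comp_ofReal
  have b2 : HasDerivAt (fun x : ℝ => (((x:ℂ))^2)⁻¹) (-(((s:ℂ)^2)^2)⁻¹ * (2 * (s:ℂ))) s := by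
    exact (hasDerivAt_inv (pow_ne_zero 2 hsne)).comp s hsq
  have H := (((hinv.const_mul (((e1:ℝ):ℂ))).sub (b2.const_mul q1)).add
      (hof.const_mul (2*q2))).add ((hx2.mul hinv).const_mul (q3 * ((e2:ℝ):ℂ)))
  convert H using 1
  · rfl
  · funext x; simp only [Pi.add_apply, Pi.sub_apply, Pi.mul_apply]; ring
  have h2 : s ^ (e2 - 1) = s ^ e2 / s := by rw [Real.rpow_sub hs, Real.rpow_one]
  rw [h2]
  push_cast
  ring

lemma alg (N C J K U V R T u v w : ℂ) (hn : N^2 - N - 4 = 0) (hJ : J^2 = -1)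
    (hu : U * u = 1) (hv : V * v = 1) (hw : K * w = 1) :
    J * ((-2 + N/2) * v + (J*U^2)/4 * v^2 + J*C*R*(2-N)*T*v)
      = ((2-N)*u - (J*v)/2*U + J*C*T*(N-2)*R*u) * ((2-N)*u - (J*v)/2*U + J*C*T*(N-2)*R*u)
        + (-((2-N)*u^2) - (J*v)/2 + J*C*T*(N-2)*((N-2)*R*u^2 - R*u^2))
        + (N-1)*u * ((2-N)*u - (J*v)/2*U + J*C*T*(N-2)*R*u)
        + K * (C^2*(8-3*N)*w * (R^2*u^2*T^2)) := by
  linear_combination (-C^2*J^2*R^2*T^2*u^2) * hn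
    + (2*C*R*T*v - 2*C*U*R*T*u*v - 8*C^2*R^2*T^2*u^2 - N*C*R*T*v + N*C*U*R*T*u*v
        + 3*N*C^2*R^2*T^2*u^2) * hJ
    + ((3/2)*J*v + 2*C*R*T*v - (1/2)*N*J*v - N*C*R*T*v) * hu
    + (-8*C^2*R^2*T^2*u^2 + 3*N*C^2*R^2*T^2*u^2) * hw

theorem stmt14 (k n c1 c2 : ℝ) (hk : 0 < k) (hn : n ^ 2 - n - 4 = 0)
    (hc2 : 0 < c2 ^ 2 * (8 - 3 * n) / k) :
    ∀ t r : ℝ, 0 < t → 0 < r →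
      gnls k (4 / n) n
        (fun t r => (((c2 ^ 2 * (8 - 3 * n) / k) ^ (n / 4) : ℝ) : ℂ)
          * ((r ^ (2 - n) : ℝ) : ℂ) * ((t ^ (-2 + n / 2) : ℝ) : ℂ)
          * Complex.exp (Complex.I * c1 - Complex.I * r ^ 2 / (4 * t)
              + Complex.I * c2 * ((r ^ (n - 2) : ℝ) : ℂ) * ((t ^ (2 - n) : ℝ) : ℂ))) t r := by
  intro t r ht hr
  have hn0 : n ≠ 0 := by intro h; rw [h] at hn; norm_num at hn
  have hnC : (n:ℂ)^2 - n - 4 = 0 := by exact_mod_cast congrArg (Complex.ofReal) hn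
  set A : ℝ := (c2 ^ 2 * (8 - 3 * n) / k) ^ (n / 4) with hAdef
  have hA : 0 < A := Real.rpow_pos_of_pos hc2 _
  -- the t-direction derivative
  have hfT : (fun s : ℝ => (A:ℂ) * ((r ^ (2 - n) : ℝ) : ℂ) * ((s ^ (-2 + n / 2) : ℝ) : ℂ)
        * Complex.exp (Complex.I * c1 - Complex.I * r ^ 2 / (4 * s)
            + Complex.I * c2 * ((r ^ (n - 2) : ℝ) : ℂ) * ((s ^ (2 - n) : ℝ) : ℂ)))
      = (fun x : ℝ => ((A:ℂ) * ((r ^ (2 - n) : ℝ) : ℂ)) * ((x ^ (-2 + n/2) : ℝ) : ℂ) *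
        Complex.exp ((Complex.I * c1) + (-(Complex.I * (r:ℂ)^2)/4) * (x:ℂ)⁻¹
          + 0 * (x:ℂ)^2 + (Complex.I * c2 * ((r ^ (n - 2) : ℝ) : ℂ)) * ((x ^ (2-n) : ℝ) : ℂ))) := by
    funext x
    rw [show (Complex.I * c1 - Complex.I * r ^ 2 / (4 * x)
            + Complex.I * c2 * ((r ^ (n - 2) : ℝ) : ℂ) * ((x ^ (2 - n) : ℝ) : ℂ))
        = ((Complex.I * c1) + (-(Complex.I * (r:ℂ)^2)/4) * (x:ℂ)⁻¹
          + 0 * (x:ℂ)^2 + (Complex.I * c2 * ((r ^ (n - 2) : ℝ) : ℂ)) * ((x ^ (2-n) : ℝ) : ℂ)) by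
      ring]
  have HT := key ((A:ℂ) * ((r ^ (2 - n) : ℝ) : ℂ)) (Complex.I * c1) (-(Complex.I * (r:ℂ)^2)/4)
      0 (Complex.I * c2 * ((r ^ (n - 2) : ℝ) : ℂ)) (-2 + n/2) (2-n) ht
  rw [← hfT] at HT
  -- the r-direction derivative, at every point s > 0
  have hfR : (fun s : ℝ => (A:ℂ) * ((s ^ (2 - n) : ℝ) : ℂ) * ((t ^ (-2 + n / 2) : ℝ) : ℂ)
        * Complex.exp (Complex.I * c1 - Complex.I * s ^ 2 / (4 * t)
            + Complex.I * c2 * ((s ^ (n - 2) : ℝ) : ℂ) * ((t ^ (2 - n) : ℝ) : ℂ)))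
      = (fun x : ℝ => ((A:ℂ) * ((t ^ (-2 + n/2) : ℝ) : ℂ)) * ((x ^ (2 - n) : ℝ) : ℂ) *
        Complex.exp ((Complex.I * c1) + 0 * (x:ℂ)⁻¹
          + (-Complex.I/(4*(t:ℂ))) * (x:ℂ)^2
          + (Complex.I * c2 * ((t ^ (2 - n) : ℝ) : ℂ)) * ((x ^ (n-2) : ℝ) : ℂ))) := by
    funext x
    rw [show (Complex.I * c1 - Complex.I * x ^ 2 / (4 * t)
            + Complex.I * c2 * ((x ^ (n - 2) : ℝ) : ℂ) * ((t ^ (2 - n) : ℝ) : ℂ))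
        = ((Complex.I * c1) + 0 * (x:ℂ)⁻¹ + (-Complex.I/(4*(t:ℂ))) * (x:ℂ)^2
          + (Complex.I * c2 * ((t ^ (2 - n) : ℝ) : ℂ)) * ((x ^ (n-2) : ℝ) : ℂ)) by ring]
    ring
  have HRkey : ∀ s : ℝ, 0 < s → HasDerivAt
      (fun x : ℝ => ((A:ℂ) * ((t ^ (-2 + n/2) : ℝ) : ℂ)) * ((x ^ (2 - n) : ℝ) : ℂ) *
        Complex.exp ((Complex.I * c1) + 0 * (x:ℂ)⁻¹
          + (-Complex.I/(4*(t:ℂ))) * (x:ℂ)^2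
          + (Complex.I * c2 * ((t ^ (2 - n) : ℝ) : ℂ)) * ((x ^ (n-2) : ℝ) : ℂ)))
      (((A:ℂ) * ((t ^ (-2 + n/2) : ℝ) : ℂ)) * ((s ^ (2 - n) : ℝ) : ℂ) *
        Complex.exp ((Complex.I * c1) + 0 * (s:ℂ)⁻¹
          + (-Complex.I/(4*(t:ℂ))) * (s:ℂ)^2
          + (Complex.I * c2 * ((t ^ (2 - n) : ℝ) : ℂ)) * ((s ^ (n-2) : ℝ) : ℂ)) *
        (((2-n : ℝ) : ℂ) * (s:ℂ)⁻¹ - 0 * ((s:ℂ)^2)⁻¹ + 2 * (-Complex.I/(4*(t:ℂ))) * (s:ℂ)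
          + (Complex.I * c2 * ((t ^ (2 - n) : ℝ) : ℂ)) * ((n-2 : ℝ) : ℂ)
            * ((s ^ (n-2) : ℝ) : ℂ) * (s:ℂ)⁻¹)) s := fun s hs =>
    key ((A:ℂ) * ((t ^ (-2 + n/2) : ℝ) : ℂ)) (Complex.I * c1) 0 (-Complex.I/(4*(t:ℂ)))
      (Complex.I * c2 * ((t ^ (2 - n) : ℝ) : ℂ)) (2-n) (n-2) hs
  have hder1 : ∀ s : ℝ, 0 < s → deriv (fun x : ℝ => (A:ℂ) * ((x ^ (2 - n) : ℝ) : ℂ)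
        * ((t ^ (-2 + n / 2) : ℝ) : ℂ)
        * Complex.exp (Complex.I * c1 - Complex.I * x ^ 2 / (4 * t)
            + Complex.I * c2 * ((x ^ (n - 2) : ℝ) : ℂ) * ((t ^ (2 - n) : ℝ) : ℂ))) s
      = ((A:ℂ) * ((t ^ (-2 + n/2) : ℝ) : ℂ)) * ((s ^ (2 - n) : ℝ) : ℂ) *
        Complex.exp ((Complex.I * c1) + 0 * (s:ℂ)⁻¹
          + (-Complex.I/(4*(t:ℂ))) * (s:ℂ)^2
          + (Complex.I * c2 * ((t ^ (2 - n) : ℝ) : ℂ)) * ((s ^ (n-2) : ℝ) : ℂ)) *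
        (((2-n : ℝ) : ℂ) * (s:ℂ)⁻¹ - 0 * ((s:ℂ)^2)⁻¹ + 2 * (-Complex.I/(4*(t:ℂ))) * (s:ℂ)
          + (Complex.I * c2 * ((t ^ (2 - n) : ℝ) : ℂ)) * ((n-2 : ℝ) : ℂ)
            * ((s ^ (n-2) : ℝ) : ℂ) * (s:ℂ)⁻¹) := by
    intro s hs
    rw [hfR]
    exact (HRkey s hs).deriv
  have hev : deriv (fun x : ℝ => (A:ℂ) * ((x ^ (2 - n) : ℝ) : ℂ)
        * ((t ^ (-2 + n / 2) : ℝ) : ℂ)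
        * Complex.exp (Complex.I * c1 - Complex.I * x ^ 2 / (4 * t)
            + Complex.I * c2 * ((x ^ (n - 2) : ℝ) : ℂ) * ((t ^ (2 - n) : ℝ) : ℂ)))
      =ᶠ[nhds r] (fun s : ℝ =>
      ((A:ℂ) * ((t ^ (-2 + n/2) : ℝ) : ℂ)) * ((s ^ (2 - n) : ℝ) : ℂ) *
        Complex.exp ((Complex.I * c1) + 0 * (s:ℂ)⁻¹
          + (-Complex.I/(4*(t:ℂ))) * (s:ℂ)^2
          + (Complex.I * c2 * ((t ^ (2 - n) : ℝ) : ℂ)) * ((s ^ (n-2) : ℝ) : ℂ)) *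
        (((2-n : ℝ) : ℂ) * (s:ℂ)⁻¹ - 0 * ((s:ℂ)^2)⁻¹ + 2 * (-Complex.I/(4*(t:ℂ))) * (s:ℂ)
          + (Complex.I * c2 * ((t ^ (2 - n) : ℝ) : ℂ)) * ((n-2 : ℝ) : ℂ)
            * ((s ^ (n-2) : ℝ) : ℂ) * (s:ℂ)⁻¹)) := by
    filter_upwards [Ioi_mem_nhds hr] with s hs
    exact hder1 s hs
  have h2nd := hev.deriv_eq
  have HB := key2 (0:ℂ) (-Complex.I/(4*(t:ℂ))) (Complex.I * c2 * ((t ^ (2 - n) : ℝ) : ℂ))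
    (2-n) (n-2) hr
  have HDR := (HRkey r hr).mul HB
  -- the absolute value
  have habsz : Complex.I * (c1:ℂ) - Complex.I * r ^ 2 / (4 * t)
        + Complex.I * c2 * ((r ^ (n - 2) : ℝ) : ℂ) * ((t ^ (2 - n) : ℝ) : ℂ)
      = ((c1 - r^2/(4*t) + c2*(r^(n-2))*(t^(2-n)) : ℝ) : ℂ) * Complex.I := by
    push_cast; ring
  have habs : ‖(A:ℂ) * ((r ^ (2 - n) : ℝ) : ℂ) * ((t ^ (-2 + n / 2) : ℝ) : ℂ)
        * Complex.exp (Complex.I * c1 - Complex.I * r ^ 2 / (4 * t)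
            + Complex.I * c2 * ((r ^ (n - 2) : ℝ) : ℂ) * ((t ^ (2 - n) : ℝ) : ℂ))‖
      = A * r^(2-n) * t^(-2+n/2) := by
    rw [norm_mul, norm_mul, norm_mul, habsz, Complex.norm_exp_ofReal_mul_I,
      Complex.norm_real, Real.norm_eq_abs, Complex.norm_real, Real.norm_eq_abs, Complex.norm_real, Real.norm_eq_abs,
      abs_of_pos hA, abs_of_pos (Real.rpow_pos_of_pos hr _),
      abs_of_pos (Real.rpow_pos_of_pos ht _), mul_one]
  have e3 : A ^ (4/n) = c2^2*(8-3*n)/k := by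
    rw [hAdef, ← Real.rpow_mul hc2.le, show (n/4)*(4/n) = 1 by field_simp, Real.rpow_one]
  have e1 : (2-n)*(4/n) = 2*n - 6 := by
    field_simp
    linear_combination (-2)*hn
  have e2 : (-2+n/2)*(4/n) = 4 - 2*n := by
    field_simp
    linear_combination 4*hn
  have hr26 : r ^ (2*n-6) = (r^(n-2))^2 * (r^2)⁻¹ := by
    rw [← Real.rpow_natCast (r ^ (n-2)) 2, ← Real.rpow_natCast r 2,
      ← Real.rpow_mul hr.le, ← Real.rpow_neg hr.le, ← Real.rpow_add hr]
    congr 1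
    ring
  have ht22 : t ^ (4-2*n) = (t^(2-n))^2 := by
    rw [← Real.rpow_natCast (t ^ (2-n)) 2, ← Real.rpow_mul ht.le]
    congr 1
    ring
  have hpow : (A * r^(2-n) * t^(-2+n/2)) ^ (4/n)
      = (c2^2*(8-3*n)/k) * ((r^(n-2))^2 * (r^2)⁻¹ * ((t^(2-n))^2)) := by
    rw [Real.mul_rpow (by positivity) (by positivity),
      Real.mul_rpow (by positivity) (by positivity), e3,
      ← Real.rpow_mul hr.le, ← Real.rpow_mul ht.le, e1, e2, hr26, ht22]
    ring
  have hrC : (r:ℂ) ≠ 0 := by exact_mod_cast hr.ne'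
  have htC : (t:ℂ) ≠ 0 := by exact_mod_cast ht.ne'
  have hkC : (k:ℂ) ≠ 0 := by exact_mod_cast hk.ne'
  have hId : Complex.I * (↑(-(2:ℝ) + n / 2) * (↑t:ℂ)⁻¹ - -(Complex.I * (↑r:ℂ) ^ 2) / 4 * ((↑t:ℂ) ^ 2)⁻¹
        + 2 * 0 * (↑t:ℂ) + Complex.I * ↑c2 * ↑(r ^ (n - 2)) * ↑((2:ℝ) - n) * ↑(t ^ (2 - n)) * (↑t:ℂ)⁻¹)
      = (↑((2:ℝ) - n) * (↑r:ℂ)⁻¹ - 0 * ((↑r:ℂ) ^ 2)⁻¹ + 2 * (-Complex.I / (4 * ↑t)) * (↑r:ℂ) +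
            Complex.I * ↑c2 * ↑(t ^ (2 - n)) * ↑(n - (2:ℝ)) * ↑(r ^ (n - 2)) * (↑r:ℂ)⁻¹) * (↑((2:ℝ) - n) * (↑r:ℂ)⁻¹ - 0 * ((↑r:ℂ) ^ 2)⁻¹ + 2 * (-Complex.I / (4 * ↑t)) * (↑r:ℂ) +
            Complex.I * ↑c2 * ↑(t ^ (2 - n)) * ↑(n - (2:ℝ)) * ↑(r ^ (n - 2)) * (↑r:ℂ)⁻¹) + (-(↑((2:ℝ) - n) * ((↑r:ℂ) ^ 2)⁻¹) + 2 * 0 * (↑r:ℂ) * (((↑r:ℂ) ^ 2) ^ 2)⁻¹ + 2 * (-Complex.I / (4 * ↑t)) +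
          Complex.I * ↑c2 * ↑(t ^ (2 - n)) * ↑(n - (2:ℝ)) *
            (↑(n - (2:ℝ)) * ↑(r ^ (n - 2)) * ((↑r:ℂ) ^ 2)⁻¹ - ↑(r ^ (n - 2)) * ((↑r:ℂ) ^ 2)⁻¹))
        + (((n - 1) / r : ℝ):ℂ) * (↑((2:ℝ) - n) * (↑r:ℂ)⁻¹ - 0 * ((↑r:ℂ) ^ 2)⁻¹ + 2 * (-Complex.I / (4 * ↑t)) * (↑r:ℂ) +
            Complex.I * ↑c2 * ↑(t ^ (2 - n)) * ↑(n - (2:ℝ)) * ↑(r ^ (n - 2)) * (↑r:ℂ)⁻¹)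
        + (k:ℂ) * ((c2^2*(8-3*n)/k * ((r^(n-2))^2 * (r^2)⁻¹ * ((t^(2-n))^2)) : ℝ) : ℂ) := by
    push_cast
    linear_combination alg (n:ℂ) (c2:ℂ) Complex.I (k:ℂ) (r:ℂ) (t:ℂ)
      ((r ^ (n-2) : ℝ) : ℂ) ((t ^ (2-n) : ℝ) : ℂ) ((r:ℂ))⁻¹ ((t:ℂ))⁻¹ ((k:ℂ))⁻¹
      hnC Complex.I_sq (mul_inv_cancel₀ hrC) (mul_inv_cancel₀ htC) (mul_inv_cancel₀ hkC)
  unfold gnls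
  simp only []
  rw [h2nd]
  erw [HDR.deriv]
  rw [hder1 r hr, HT.deriv, habs, hpow]
  rw [show (Complex.I * ↑c1 + -(Complex.I * (↑r:ℂ) ^ 2) / 4 * (↑t:ℂ)⁻¹ + 0 * (↑t:ℂ) ^ 2
        + Complex.I * ↑c2 * ↑(r ^ (n - 2)) * ↑(t ^ (2 - n)))
      = (Complex.I * ↑c1 - Complex.I * ↑r ^ 2 / (4 * ↑t)
        + Complex.I * ↑c2 * ↑(r ^ (n - 2)) * ↑(t ^ (2 - n))) by ring,
    show (Complex.I * ↑c1 + 0 * (↑r:ℂ)⁻¹ + -Complex.I / (4 * ↑t) * (↑r:ℂ) ^ 2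
        + Complex.I * ↑c2 * ↑(t ^ (2 - n)) * ↑(r ^ (n - 2)))
      = (Complex.I * ↑c1 - Complex.I * ↑r ^ 2 / (4 * ↑t)
        + Complex.I * ↑c2 * ↑(r ^ (n - 2)) * ↑(t ^ (2 - n))) by ring]
  linear_combination ((A:ℂ) * ↑(t ^ (-2 + n/2)) * ↑(r ^ (2 - n))
    * Complex.exp (Complex.I * ↑c1 - Complex.I * ↑r ^ 2 / (4 * ↑t)
        + Complex.I * ↑c2 * ↑(r ^ (n - 2)) * ↑(t ^ (2 - n)))) * hId
end
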